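/- arXiv:2201.04423 — 7 statements merged into one kernel-verified Lean document; each statement's English description precedes it below -/
import Mathlib

section
/- Let D be an integral domain and S a commutative unital D-algebra that is torsion-free as a D-module and generated as a D-algebra by its idempotents. Then every element s of S can be written as s = Σ_{i=0}^n a_i e_i where a_i ∈ D are pairwise distinct and e_0, ..., e_n are pairwise orthogonal idempotents of S with e_0 ∨ ... ∨ e_n = 1 (join in the boolean algebra of idempotents), and this representation is unique up to reordering. -/
open Finset

/-- A `D`-algebra `S` is torsion-free as a `D`-module. -/
def SpTorsionFree (D S : Type*) [CommRing D] [CommRing S] [Algebra D S] : Prop :=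
  ∀ (a : D) (s : S), a • s = 0 → a = 0 ∨ s = 0

/-- `S` is generated as a `D`-algebra by its idempotents. -/
def SpIdemGenerated (D S : Type*) [CommRing D] [CommRing S] [Algebra D S] : Prop :=
  Algebra.adjoin D {e : S | IsIdempotentElem e} = ⊤

/-- A Specker `D`-algebra: commutative unital, torsion-free, idempotent-generated. -/
def IsSpecker (D S : Type*) [CommRing D] [CommRing S] [Algebra D S] : Prop :=
  SpTorsionFree D S ∧ SpIdemGenerated D S

/-- The idempotents of `S`. -/
abbrev IdemOf (S : Type*) [Monoid S] := {e : S // IsIdempotentElem e}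

/-- A full orthogonal decomposition of `s` with pairwise distinct coefficients and
nonzero pairwise orthogonal idempotents summing (= joining) to `1`. -/
def FullOrthDecomp (D S : Type*) [CommRing D] [CommRing S] [Algebra D S] {n : ℕ}
    (a : Fin n → D) (e : Fin n → S) (s : S) : Prop :=
  Function.Injective a ∧ (∀ i, IsIdempotentElem (e i)) ∧ (∀ i, e i ≠ 0) ∧
    (∀ i j, i ≠ j → e i * e j = 0) ∧ (∑ i, e i = 1) ∧ s = ∑ i, a i • e i

/-- `s` has an orthogonal decomposition with nonnegative coefficients. -/
def OrthNonnegDecomp (D S : Type*) [CommRing D] [LinearOrder D] [IsStrictOrderedRing D] [CommRing S] [Algebra D S]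
    (s : S) : Prop :=
  ∃ (n : ℕ) (a : Fin n → D) (e : Fin n → S),
    (∀ i, 0 ≤ a i) ∧ (∀ i, IsIdempotentElem (e i)) ∧
    (∀ i j, i ≠ j → e i * e j = 0) ∧ s = ∑ i, a i • e i

/-- The canonical f-algebra order relation on a Specker algebra. -/
def specLE (D S : Type*) [CommRing D] [LinearOrder D] [IsStrictOrderedRing D] [CommRing S] [Algebra D S]
    (s t : S) : Prop :=
  OrthNonnegDecomp D S (t - s)

section Rel
variable {S : Type*}
def relUB (le : S → S → Prop) (A : Set S) (u : S) : Prop := ∀ x ∈ A, le x u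
def relLB (le : S → S → Prop) (A : Set S) (u : S) : Prop := ∀ x ∈ A, le u x
def relIsLUB (le : S → S → Prop) (A : Set S) (u : S) : Prop :=
  relUB le A u ∧ ∀ v, relUB le A v → le u v
def relIsGLB (le : S → S → Prop) (A : Set S) (u : S) : Prop :=
  relLB le A u ∧ ∀ v, relLB le A v → le v u
end Rel

/-- A function `D → B` belonging to Foster's boolean power `D[B]*`:
finitely valued, pairwise disjoint values, values join to `⊤`. -/
def IsBPFn (D B : Type*) [CommRing D] [BooleanAlgebra B] (f : D → B) : Prop :=
  (Set.range f).Finite ∧ (∀ a b : D, a ≠ b → f a ⊓ f b = ⊥) ∧ IsLUB (Set.range f) ⊤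

/-- Foster's boolean power `D[B]*` as a set of functions. -/
def DBStar (D B : Type*) [CommRing D] [BooleanAlgebra B] : Type _ :=
  {f : D → B // IsBPFn D B f}

/-- The boolean-power `D`-algebra operations on `D[B]*`, characterized via least upper bounds. -/
def FosterOps (D B : Type*) [CommRing D] [BooleanAlgebra B]
    [CommRing (DBStar D B)] [Algebra D (DBStar D B)] : Prop :=
  (∀ f g : DBStar D B, ∀ a : D,
      IsLUB {x : B | ∃ b c : D, b + c = a ∧ x = f.1 b ⊓ g.1 c} ((f + g).1 a)) ∧
  (∀ f g : DBStar D B, ∀ a : D,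
      IsLUB {x : B | ∃ b c : D, b * c = a ∧ x = f.1 b ⊓ g.1 c} ((f * g).1 a)) ∧
  (∀ (b : D) (f : DBStar D B) (a : D),
      IsLUB {x : B | ∃ c : D, b * c = a ∧ x = f.1 c} ((b • f).1 a))

/-- Decreasing step functions `D → B` determined by a chain `1 = e₀ > e₁ > ⋯ > eₙ > 0`
and thresholds `a₀ < a₁ < ⋯ < aₙ`. -/
def IsFlatFn (D B : Type*) [CommRing D] [LinearOrder D] [IsStrictOrderedRing D] [BooleanAlgebra B] (f : D → B) : Prop :=
  ∃ (n : ℕ) (a : Fin (n + 1) → D) (e : Fin (n + 1) → B),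
    StrictMono a ∧ StrictAnti e ∧ e 0 = ⊤ ∧ ⊥ < e (Fin.last n) ∧
    (∀ x : D, x ≤ a 0 → f x = ⊤) ∧
    (∀ (i : Fin n) (x : D), a i.castSucc < x → x ≤ a i.succ → f x = e i.succ) ∧
    (∀ x : D, a (Fin.last n) < x → f x = ⊥)

/-- The de Vries power `D[B]♭` as a set of decreasing step functions. -/
def DBFlat (D B : Type*) [CommRing D] [LinearOrder D] [IsStrictOrderedRing D] [BooleanAlgebra B] : Type _ :=
  {f : D → B // IsFlatFn D B f}

/-- A proximity on a torsion-free f-algebra over `D` (axioms (P1)–(P10)). -/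
def IsProximity (D S : Type*) [CommRing D] [LinearOrder D] [IsStrictOrderedRing D] [CommRing S] [Algebra D S]
    [Lattice S] (r : S → S → Prop) : Prop :=
  (r 0 0 ∧ r 1 1) ∧
  (∀ s t : S, r s t → s ≤ t) ∧
  (∀ s t u v : S, s ≤ t → r t u → u ≤ v → r s v) ∧
  (∀ s t u : S, r s t → r s u → r s (t ⊓ u)) ∧
  (∀ s t : S, r s t → r (-t) (-s)) ∧
  (∀ s t u v : S, r s t → r u v → r (s + u) (t + v)) ∧
  (∀ (s t : S) (a : D), 0 < a → r s t → r (a • s) (a • t)) ∧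
  (∀ s t : S, (∃ a : D, 0 < a ∧ r (a • s) (a • t)) → r s t) ∧
  (∀ s t u v : S, 0 ≤ s → 0 ≤ t → 0 ≤ u → 0 ≤ v → r s t → r u v → r (s * u) (t * v)) ∧
  (∀ s t : S, r s t → ∃ u, r s u ∧ r u t) ∧
  (∀ s : S, 0 < s → ∃ t, 0 < t ∧ r t s)

/-- A de Vries proximity on a boolean algebra. -/
def IsDeVriesProx (B : Type*) [BooleanAlgebra B] (p : B → B → Prop) : Prop :=
  (p ⊥ ⊥ ∧ p ⊤ ⊤) ∧
  (∀ a b : B, p a b → a ≤ b) ∧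
  (∀ a b c d : B, a ≤ b → p b c → c ≤ d → p a d) ∧
  (∀ a b c : B, p a b → p a c → p a (b ⊓ c)) ∧
  (∀ a b : B, p a b → p bᶜ aᶜ) ∧
  (∀ a b : B, p a b → ∃ c, p a c ∧ p c b) ∧
  (∀ a : B, a ≠ ⊥ → ∃ b, b ≠ ⊥ ∧ p b a)

/-- A Baer ring: the annihilator of every ideal is generated by an idempotent. -/
def IsBaer (S : Type*) [CommRing S] : Prop :=
  ∀ I : Ideal S, ∃ e : S, IsIdempotentElem e ∧
    ∀ r : S, (∀ s ∈ I, r * s = 0) ↔ ∃ x : S, r = x * e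

/-- Proximity morphisms between proximity (Baer-)Specker algebras (axioms (M1)–(M7)). -/
def IsProxMorphism (D S T : Type*) [CommRing D] [LinearOrder D] [IsStrictOrderedRing D]
    [CommRing S] [Algebra D S] [CommRing T] [Algebra D T] [Lattice S] [Lattice T]
    (rS : S → S → Prop) (rT : T → T → Prop) (α : S → T) : Prop :=
  α 0 = 0 ∧
  (∀ s t : S, α (s ⊓ t) = α s ⊓ α t) ∧
  (∀ s t : S, rS s t → rT (-(α (-s))) (α t)) ∧
  (∀ t : S, IsLUB {x : T | ∃ s : S, rS s t ∧ x = α s} (α t)) ∧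
  (∀ (s : S) (a : D), α (s + algebraMap D S a) = α s + algebraMap D T a) ∧
  (∀ (s : S) (a : D), 0 ≤ a → α (a • s) = a • α s) ∧
  (∀ (s : S) (a : D), α (s ⊔ algebraMap D S a) = α s ⊔ algebraMap D T a)

section Aux
variable {D S : Type*} [CommRing D] [CommRing S] [Algebra D S]

/-- Pre-decomposition: orthogonal idempotents summing to 1, coefficients arbitrary. -/
def PreDecomp (D : Type*) {S : Type*} [CommRing D] [CommRing S] [Algebra D S] (s : S) : Prop :=
  ∃ (ι : Type) (t : Finset ι) (a : ι → D) (e : ι → S),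
    (∀ i ∈ t, IsIdempotentElem (e i)) ∧
    (∀ i ∈ t, ∀ j ∈ t, i ≠ j → e i * e j = 0) ∧
    (∑ i ∈ t, e i = 1) ∧ s = ∑ i ∈ t, a i • e i

lemma sum_orth_idem {ι : Type*} (t : Finset ι) (e : ι → S)
    (hid : ∀ i ∈ t, IsIdempotentElem (e i))
    (horth : ∀ i ∈ t, ∀ j ∈ t, i ≠ j → e i * e j = 0) :
    IsIdempotentElem (∑ i ∈ t, e i) := by
  unfold IsIdempotentElem
  rw [Finset.sum_mul_sum]
  apply Finset.sum_congr rfl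
  intro i hi
  rw [Finset.sum_eq_single i (fun j hj hne => horth i hi j hj (Ne.symm hne)) (fun h => (h hi).elim)]
  exact hid i hi

lemma preDecomp_of_mem_adjoin {s : S}
    (hs : s ∈ Algebra.adjoin D {e : S | IsIdempotentElem e}) : PreDecomp D s := by
  induction hs using Algebra.adjoin_induction with
  | mem x hx =>
    refine ⟨ℕ, {0, 1}, fun i => if i = 0 then 1 else 0, fun i => if i = 0 then x else 1 - x,
      ?_, ?_, ?_, ?_⟩
    · intro i _
      by_cases h : i = 0
      · simpa [h] using hx
      · simpa [h] using hx.one_sub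
    · intro i hi j hj hne
      simp only [Finset.mem_insert, Finset.mem_singleton] at hi hj
      have hx0 : x * (1 - x) = 0 := by rw [mul_one_sub, show x * x = x from hx, sub_self]
      have hx0' : (1 - x) * x = 0 := by rw [mul_comm]; exact hx0
      rcases hi with rfl | rfl <;> rcases hj with rfl | rfl <;> simp_all
    · rw [Finset.sum_pair (by norm_num)]; simp
    · rw [Finset.sum_pair (by norm_num)]; simp
  | algebraMap r =>
    exact ⟨ℕ, {0}, fun _ => r, fun _ => 1, by simp [IsIdempotentElem],
      by simp, by simp, by simp [Algebra.algebraMap_eq_smul_one]⟩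
  | add x y _ _ hx hy =>
    obtain ⟨ι₁, t₁, a₁, e₁, hid₁, ho₁, hs₁, he₁⟩ := hx
    obtain ⟨ι₂, t₂, a₂, e₂, hid₂, ho₂, hs₂, he₂⟩ := hy
    refine ⟨ι₁ × ι₂, t₁ ×ˢ t₂, fun p => a₁ p.1 + a₂ p.2, fun p => e₁ p.1 * e₂ p.2,
      ?_, ?_, ?_, ?_⟩
    · rintro ⟨i, j⟩ hij
      rw [Finset.mem_product] at hij
      have h1 := hid₁ i hij.1; have h2 := hid₂ j hij.2
      unfold IsIdempotentElem at *
      rw [mul_mul_mul_comm, h1, h2]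
    · rintro ⟨i, j⟩ hij ⟨i', j'⟩ hij' hne
      rw [Finset.mem_product] at hij hij'
      rw [mul_mul_mul_comm]
      by_cases hii : i = i'
      · subst hii
        have : j ≠ j' := fun h => hne (by rw [h])
        rw [ho₂ j hij.2 j' hij'.2 this, mul_zero]
      · rw [ho₁ i hij.1 i' hij'.1 hii, zero_mul]
    · rw [Finset.sum_product]
      calc ∑ i ∈ t₁, ∑ j ∈ t₂, e₁ i * e₂ j = ∑ i ∈ t₁, e₁ i * ∑ j ∈ t₂, e₂ j := by
            simp [Finset.mul_sum]
        _ = 1 := by rw [hs₂]; simp [hs₁]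
    · rw [Finset.sum_product]
      have key : ∀ i ∈ t₁, ∑ j ∈ t₂, (a₁ i + a₂ j) • (e₁ i * e₂ j) = a₁ i • e₁ i + e₁ i * y := by
        intro i _
        have h2 : ∀ j ∈ t₂, (a₁ i + a₂ j) • (e₁ i * e₂ j)
            = a₁ i • e₁ i * e₂ j + e₁ i * (a₂ j • e₂ j) := by
          intro j _
          rw [add_smul, smul_mul_assoc, mul_smul_comm]
        rw [Finset.sum_congr rfl h2, Finset.sum_add_distrib, ← Finset.mul_sum, ← Finset.mul_sum,
          hs₂, mul_one, ← he₂]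
      rw [Finset.sum_congr rfl key, Finset.sum_add_distrib, ← he₁, ← Finset.sum_mul, hs₁, one_mul]
  | mul x y _ _ hx hy =>
    obtain ⟨ι₁, t₁, a₁, e₁, hid₁, ho₁, hs₁, he₁⟩ := hx
    obtain ⟨ι₂, t₂, a₂, e₂, hid₂, ho₂, hs₂, he₂⟩ := hy
    refine ⟨ι₁ × ι₂, t₁ ×ˢ t₂, fun p => a₁ p.1 * a₂ p.2, fun p => e₁ p.1 * e₂ p.2,
      ?_, ?_, ?_, ?_⟩
    · rintro ⟨i, j⟩ hij
      rw [Finset.mem_product] at hij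
      have h1 := hid₁ i hij.1; have h2 := hid₂ j hij.2
      unfold IsIdempotentElem at *
      rw [mul_mul_mul_comm, h1, h2]
    · rintro ⟨i, j⟩ hij ⟨i', j'⟩ hij' hne
      rw [Finset.mem_product] at hij hij'
      rw [mul_mul_mul_comm]
      by_cases hii : i = i'
      · subst hii
        have : j ≠ j' := fun h => hne (by rw [h])
        rw [ho₂ j hij.2 j' hij'.2 this, mul_zero]
      · rw [ho₁ i hij.1 i' hij'.1 hii, zero_mul]
    · rw [Finset.sum_product]
      calc ∑ i ∈ t₁, ∑ j ∈ t₂, e₁ i * e₂ j = ∑ i ∈ t₁, e₁ i * ∑ j ∈ t₂, e₂ j := by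
            simp [Finset.mul_sum]
        _ = 1 := by rw [hs₂]; simp [hs₁]
    · rw [he₁, he₂, Finset.sum_mul_sum, Finset.sum_product]
      apply Finset.sum_congr rfl; intro i _
      apply Finset.sum_congr rfl; intro j _
      rw [smul_mul_smul_comm]

end Aux

section Merge
variable {D S : Type*} [CommRing D] [CommRing S] [Algebra D S]

lemma fullOrthDecomp_of_preDecomp {s : S} (h : PreDecomp D s) :
    ∃ (n : ℕ) (a : Fin n → D) (e : Fin n → S), FullOrthDecomp D S a e s := by
  obtain ⟨ι, t, a, e, hid, horth, hsum, hse⟩ := h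
  classical
  set E : D → S := fun d => ∑ i ∈ t.filter (fun i => a i = d), e i with hE
  set A : Finset D := (t.image a).filter (fun d => E d ≠ 0) with hA
  -- basic facts
  have hfilt : ∀ d, ∀ i ∈ t.filter (fun i => a i = d), i ∈ t := fun d i hi =>
    (Finset.mem_filter.mp hi).1
  have hEid : ∀ d, IsIdempotentElem (E d) := by
    intro d
    exact sum_orth_idem _ _ (fun i hi => hid i (hfilt d i hi))
      (fun i hi j hj hne => horth i (hfilt d i hi) j (hfilt d j hj) hne)
  have hEorth : ∀ d d', d ≠ d' → E d * E d' = 0 := by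
    intro d d' hne
    rw [hE]
    simp only
    rw [Finset.sum_mul_sum]
    apply Finset.sum_eq_zero
    intro i hi
    apply Finset.sum_eq_zero
    intro j hj
    have hi' := Finset.mem_filter.mp hi
    have hj' := Finset.mem_filter.mp hj
    exact horth i hi'.1 j hj'.1 (fun hij => hne (by rw [← hi'.2, ← hj'.2, hij]))
  have hEsum : ∑ d ∈ t.image a, E d = 1 := by
    rw [hE]
    simp only
    rw [Finset.sum_fiberwise_of_maps_to (fun i hi => Finset.mem_image_of_mem a hi)]
    exact hsum
  have hEs : ∑ d ∈ t.image a, d • E d = s := by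
    rw [hE]
    simp only
    have : ∀ d ∈ t.image a, d • ∑ i ∈ t.filter (fun i => a i = d), e i
        = ∑ i ∈ t.filter (fun i => a i = d), a i • e i := by
      intro d _
      rw [Finset.smul_sum]
      exact Finset.sum_congr rfl fun i hi => by rw [(Finset.mem_filter.mp hi).2]
    rw [Finset.sum_congr rfl this,
      Finset.sum_fiberwise_of_maps_to (fun i hi => Finset.mem_image_of_mem a hi)]
    exact hse.symm
  -- restrict to nonzero fibers
  have hAsub : A ⊆ t.image a := Finset.filter_subset _ _
  have hzero : ∀ d ∈ t.image a, d ∉ A → E d = 0 := by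
    intro d hd hdA
    by_contra hne
    exact hdA (Finset.mem_filter.mpr ⟨hd, hne⟩)
  have hAsum : ∑ d ∈ A, E d = 1 := by
    rw [Finset.sum_subset hAsub (fun d hd hdA => hzero d hd hdA)]
    exact hEsum
  have hAs : ∑ d ∈ A, d • E d = s := by
    rw [Finset.sum_subset hAsub (fun d hd hdA => by rw [hzero d hd hdA, smul_zero])]
    exact hEs
  -- enumerate A
  refine ⟨A.card, fun i => (A.equivFin.symm i : D), fun i => E (A.equivFin.symm i : D),
    ?_, fun i => hEid _, ?_, ?_, ?_, ?_⟩
  · exact fun i j hij => A.equivFin.symm.injective (Subtype.ext hij)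
  · intro i
    have := (A.equivFin.symm i).2
    exact (Finset.mem_filter.mp this).2
  · intro i j hij
    apply hEorth
    exact fun h => hij (A.equivFin.symm.injective (Subtype.ext h))
  · rw [← hAsum, ← Finset.sum_coe_sort A E]
    exact Equiv.sum_comp A.equivFin.symm (fun x : A => E (x : D))
  · rw [← hAs, ← Finset.sum_coe_sort A (fun d => d • E d)]
    exact (Equiv.sum_comp A.equivFin.symm (fun x : A => (x : D) • E (x : D))).symm

lemma fullOrthDecomp_unique (hTF : SpTorsionFree D S) {n m : ℕ}
    {a : Fin n → D} {e : Fin n → S} {b : Fin m → D} {f : Fin m → S} {s : S}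
    (h1 : FullOrthDecomp D S a e s) (h2 : FullOrthDecomp D S b f s) :
    ∃ σ : Fin n ≃ Fin m, ∀ i, b (σ i) = a i ∧ f (σ i) = e i := by
  obtain ⟨ainj, eid, ene, eorth, esum, hse⟩ := h1
  obtain ⟨binj, fid, fne, forth, fsum, hsf⟩ := h2
  have key : ∀ i j, a i = b j ∨ e i * f j = 0 := by
    intro i j
    have hx1 : s * (e i * f j) = a i • (e i * f j) := by
      rw [hse, Finset.sum_mul]
      rw [Finset.sum_eq_single i (fun k _ hk => by
        rw [smul_mul_assoc, ← mul_assoc, eorth k i hk, zero_mul, smul_zero])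
        (fun h => (h (Finset.mem_univ i)).elim)]
      rw [smul_mul_assoc, ← mul_assoc, eid i]
    have hx2 : s * (e i * f j) = b j • (e i * f j) := by
      rw [hsf, Finset.sum_mul]
      rw [Finset.sum_eq_single j (fun k _ hk => by
        rw [smul_mul_assoc, show f k * (e i * f j) = e i * (f k * f j) by ring,
          forth k j hk, mul_zero, smul_zero])
        (fun h => (h (Finset.mem_univ j)).elim)]
      rw [smul_mul_assoc, show f j * (e i * f j) = e i * (f j * f j) by ring, fid j]
    have : (a i - b j) • (e i * f j) = 0 := by
      rw [sub_smul, ← hx1, ← hx2, sub_self]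
    rcases hTF _ _ this with h | h
    · exact Or.inl (sub_eq_zero.mp h)
    · exact Or.inr h
  have esplit : ∀ i, e i = ∑ j, e i * f j := by
    intro i
    rw [← Finset.mul_sum, fsum, mul_one]
  have fsplit : ∀ j, f j = ∑ i, e i * f j := by
    intro j
    rw [← Finset.sum_mul, esum, one_mul]
  have exj : ∀ i, ∃ j, e i * f j ≠ 0 := by
    intro i
    by_contra h
    push_neg at h
    exact ene i (by rw [esplit i, Finset.sum_eq_zero fun j _ => h j])
  choose σ0 hσ0 using exj
  have hba : ∀ i, b (σ0 i) = a i := fun i =>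
    ((key i (σ0 i)).resolve_right (hσ0 i)).symm
  have huniq : ∀ i j, e i * f j ≠ 0 → j = σ0 i := by
    intro i j hj
    have h1 := (key i j).resolve_right hj
    exact binj (by rw [← h1, hba i])
  have hef : ∀ i, e i * f (σ0 i) = e i := by
    intro i
    conv_rhs => rw [esplit i]
    rw [Finset.sum_eq_single (σ0 i) (fun j _ hj => by
      by_contra hne; exact hj (huniq i j hne))
      (fun h => (h (Finset.mem_univ _)).elim)]
  have huniq' : ∀ i i' j, e i * f j ≠ 0 → e i' * f j ≠ 0 → i = i' := by
    intro i i' j hi hi'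
    have h1 := (key i j).resolve_right hi
    have h2 := (key i' j).resolve_right hi'
    exact ainj (h1.trans h2.symm)
  have hfe : ∀ i, f (σ0 i) = e i := by
    intro i
    conv_lhs => rw [fsplit (σ0 i)]
    rw [Finset.sum_eq_single i (fun i' _ hi' => by
      by_contra hne; exact hi' (huniq' i' i (σ0 i) hne (by rw [hef i]; exact ene i)))
      (fun h => (h (Finset.mem_univ _)).elim)]
    exact hef i
  have hinj : Function.Injective σ0 := by
    intro i i' hii
    have : e i = e i' := by rw [← hfe i, hii, hfe i']
    by_contra hne
    apply ene i
    have h0 : e i * e i' = 0 := eorth i i' hne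
    rw [← this] at h0
    rw [← eid i]
    exact h0
  have hsurj : Function.Surjective σ0 := by
    intro j
    have : ∃ i, e i * f j ≠ 0 := by
      by_contra h
      push_neg at h
      exact fne j (by rw [fsplit j, Finset.sum_eq_zero fun i _ => h i])
    obtain ⟨i, hi⟩ := this
    exact ⟨i, (huniq i j hi).symm⟩
  exact ⟨Equiv.ofBijective σ0 ⟨hinj, hsurj⟩, fun i => ⟨hba i, hfe i⟩⟩

end Merge

/-- existence and uniqueness (up to reordering) of full orthogonal
decompositions in a Specker `D`-algebra. -/
theorem statement0 (D S : Type*) [CommRing D] [IsDomain D] [CommRing S] [Algebra D S]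
    (hS : IsSpecker D S) (s : S) :
    (∃ (n : ℕ) (a : Fin n → D) (e : Fin n → S), FullOrthDecomp D S a e s) ∧
    (∀ (n m : ℕ) (a : Fin n → D) (e : Fin n → S) (b : Fin m → D) (f : Fin m → S),
      FullOrthDecomp D S a e s → FullOrthDecomp D S b f s →
      ∃ σ : Fin n ≃ Fin m, ∀ i, b (σ i) = a i ∧ f (σ i) = e i) := by
  constructor
  · apply fullOrthDecomp_of_preDecomp
    apply preDecomp_of_mem_adjoin
    rw [hS.2]
    exact Algebra.mem_top
  · intro n m a e b f h1 h2
    exact fullOrthDecomp_unique hS.1 h1 h2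
end

section
/- Let D be an integral domain, B a boolean algebra, and D[B]* the set of finitely-valued functions f : D → B with f(a) ∧ f(b) = 0 for all a ≠ b and ⋁ Im f = 1, with addition (f+g)(a) = ⋁{f(b) ∧ g(c) : b + c = a}, multiplication (fg)(a) = ⋁{f(b) ∧ g(c) : bc = a}, and scalar multiplication (bf)(a) = ⋁{f(c) : bc = a}. Then D[B]* is a commutative unital D-algebra. -/
open Finset

namespace BPAux

attribute [local instance] Classical.propDecidable

variable {D B : Type*} [CommRing D] [IsDomain D] [BooleanAlgebra B]

/-- The "Stone space": prime ideals of the boolean ring of `B`. -/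
abbrev Sp (B : Type*) [BooleanAlgebra B] := {J : Ideal (AsBoolRing B) // J.IsPrime}

/-- Stone map. -/
def st (b : B) : Set (Sp B) := {p | toBoolRing b ∉ p.1}

lemma st_top : st (⊤ : B) = Set.univ := by
  ext p
  simp only [st, toBoolRing_top, Set.mem_setOf_eq, Set.mem_univ, iff_true]
  exact fun h => p.2.ne_top ((Ideal.eq_top_iff_one _).2 h)

lemma st_bot : st (⊥ : B) = ∅ := by
  ext p
  simp [st, toBoolRing_bot]

lemma st_inf (a b : B) : st (a ⊓ b) = st a ∩ st b := by
  ext p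
  simp [st, toBoolRing_inf, p.2.mul_mem_iff_mem_or_mem, not_or]

lemma st_compl (b : B) : st bᶜ = (st b)ᶜ := by
  have hb : toBoolRing bᶜ = toBoolRing b + 1 := by
    rw [← hnot_eq_compl, ← symmDiff_top, toBoolRing_symmDiff, toBoolRing_top]
  ext p
  simp only [st, Set.mem_setOf_eq, Set.mem_compl_iff, hb, not_not]
  constructor
  · intro h
    by_contra hmem
    have h0 : toBoolRing b * (toBoolRing b + 1) ∈ p.1 := by
      rw [mul_add, mul_one, BooleanRing.mul_self, BooleanRing.add_self]
      exact p.1.zero_mem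
    rcases p.2.mem_or_mem h0 with h1 | h1
    · exact hmem h1
    · exact h h1
  · intro h hmem
    have h1 : toBoolRing b + (toBoolRing b + 1) ∈ p.1 := p.1.add_mem h hmem
    rw [← add_assoc, BooleanRing.add_self, zero_add] at h1
    exact p.2.ne_top ((Ideal.eq_top_iff_one _).2 h1)

lemma st_sup (a b : B) : st (a ⊔ b) = st a ∪ st b := by
  have : a ⊔ b = (aᶜ ⊓ bᶜ)ᶜ := by rw [compl_inf, compl_compl, compl_compl]
  rw [this, st_compl, st_inf, st_compl, st_compl, Set.compl_inter, compl_compl, compl_compl]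

lemma st_mono {a b : B} (h : a ≤ b) : st a ⊆ st b := by
  have : a ⊓ b = a := inf_eq_left.2 h
  rw [← this, st_inf]
  exact Set.inter_subset_right

lemma le_of_st {a b : B} (h : st a ⊆ st b) : a ≤ b := by
  by_contra hab
  have hne : a \ b ≠ ⊥ := by
    intro h0
    exact hab (sdiff_eq_bot_iff.1 h0)
  have hr : toBoolRing (a \ b) ≠ 0 := by
    intro h0
    rw [← toBoolRing_bot, toBoolRing_inj] at h0
    exact hne h0
  have hpow : ∀ n : ℕ, toBoolRing (a \ b) ^ (n + 1) = toBoolRing (a \ b) := by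
    intro n
    induction n with
    | zero => rw [pow_one]
    | succ m ih => rw [pow_succ, ih, BooleanRing.mul_self]
  have hnn : ¬ IsNilpotent (toBoolRing (a \ b)) := by
    rintro ⟨n, hn⟩
    cases n with
    | zero =>
      rw [pow_zero] at hn
      exact hr (by rw [← mul_one (toBoolRing (a \ b)), hn, mul_zero])
    | succ m => exact hr ((hpow m).symm.trans hn)
  rw [nilpotent_iff_mem_prime] at hnn
  push_neg at hnn
  obtain ⟨J, hJ, hJmem⟩ := hnn
  set p : Sp B := ⟨J, hJ⟩
  have hpa : p ∈ st (a \ b) := hJmem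
  have hpb : p ∈ st b := h (st_mono sdiff_le hpa)
  have : p ∈ st ((a \ b) ⊓ b) := by rw [st_inf]; exact ⟨hpa, hpb⟩
  rw [(disjoint_sdiff_self_left : Disjoint (a \ b) b).eq_bot, st_bot] at this
  exact this

lemma st_inj {a b : B} (h : st a = st b) : a = b :=
  le_antisymm (le_of_st h.le) (le_of_st h.ge)

lemma st_finsetSup (s : Finset B) : st (s.sup id) = ⋃ x ∈ s, st x := by
  induction s using Finset.induction with
  | empty => simp [st_bot]
  | insert _ _ h ih => rw [Finset.sup_insert]; simp [st_sup, ih]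

lemma isLUB_finsetSup (s : Finset B) : IsLUB (↑s : Set B) (s.sup id) :=
  ⟨fun x hx => Finset.le_sup (f := id) hx, fun v hv => Finset.sup_le hv⟩

section BPFn

lemma exu (f : D → B) (hf : IsBPFn D B f) (p : Sp B) : ∃! d, p ∈ st (f d) := by
  obtain ⟨hfin, hdisj, hlub⟩ := hf
  have hT : hfin.toFinset.sup id = ⊤ := by
    have h1 := isLUB_finsetSup hfin.toFinset
    rw [hfin.coe_toFinset] at h1
    exact h1.unique hlub
  have hp : p ∈ st (hfin.toFinset.sup id) := by rw [hT, st_top]; trivial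
  rw [st_finsetSup] at hp
  simp only [Set.mem_iUnion, exists_prop] at hp
  obtain ⟨x, hx, hpx⟩ := hp
  rw [Set.Finite.mem_toFinset] at hx
  obtain ⟨d, rfl⟩ := hx
  refine ⟨d, hpx, ?_⟩
  intro d' hd'
  by_contra hne
  have : p ∈ st (f d' ⊓ f d) := by rw [st_inf]; exact ⟨hd', hpx⟩
  rw [hdisj _ _ hne, st_bot] at this
  exact this

/-- The `D`-valued function on the Stone space induced by a BP function. -/
noncomputable def phi (f : D → B) (hf : IsBPFn D B f) : Sp B → D :=
  fun p => (exu f hf p).choose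

lemma st_fiber (f : D → B) (hf : IsBPFn D B f) (d : D) :
    st (f d) = {p | phi f hf p = d} := by
  ext p
  constructor
  · intro h
    exact ((exu f hf p).choose_spec.2 d h).symm
  · intro h
    rw [show d = phi f hf p from h.symm]
    exact (exu f hf p).choose_spec.1

end BPFn

/-- The map from the boolean power into the function algebra. -/
noncomputable def Phi : DBStar D B → (Sp B → D) := fun f => phi f.1 f.2

lemma Phi_inj : Function.Injective (Phi (D := D) (B := B)) := by
  intro f g h
  apply Subtype.ext
  funext d
  apply st_inj
  rw [st_fiber f.1 f.2 d, st_fiber g.1 g.2 d]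
  ext p
  simp only [Set.mem_setOf_eq]
  rw [show phi f.1 f.2 p = phi g.1 g.2 p from congrFun h p]

section Conv

variable (op : D → D → D) (f g : DBStar D B)

def Vset (a : D) : Set B := {x | ∃ b c, op b c = a ∧ x = f.1 b ⊓ g.1 c}

lemma Vfin (a : D) : (Vset op f g a).Finite := by
  apply Set.Finite.subset (Set.Finite.image2 (· ⊓ ·) f.2.1 g.2.1)
  rintro x ⟨b, c, _, rfl⟩
  exact Set.mem_image2_of_mem ⟨b, rfl⟩ ⟨c, rfl⟩

noncomputable def conv : D → B := fun a => (Vfin op f g a).toFinset.sup id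

lemma st_conv (a : D) :
    st (conv op f g a) = {p | op (Phi f p) (Phi g p) = a} := by
  unfold conv
  rw [st_finsetSup]
  ext p
  simp only [Set.mem_iUnion, Set.Finite.mem_toFinset, exists_prop, Set.mem_setOf_eq]
  constructor
  · rintro ⟨x, ⟨b, c, hbc, rfl⟩, hp⟩
    rw [st_inf] at hp
    have hb : Phi f p = b := by
      have := hp.1; rw [st_fiber f.1 f.2] at this; exact this
    have hc : Phi g p = c := by
      have := hp.2; rw [st_fiber g.1 g.2] at this; exact this
    rw [hb, hc]; exact hbc
  · intro h
    refine ⟨f.1 (Phi f p) ⊓ g.1 (Phi g p), ⟨_, _, h, rfl⟩, ?_⟩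
    rw [st_inf]
    constructor
    · rw [st_fiber f.1 f.2]; rfl
    · rw [st_fiber g.1 g.2]; rfl

lemma conv_isBPFn : IsBPFn D B (conv op f g) := by
  refine ⟨?_, ?_, ?_⟩
  · set W := (Set.Finite.image2 (· ⊓ ·) f.2.1 g.2.1).toFinset with hW
    apply Set.Finite.subset (W.powerset.image fun s => s.sup id).finite_toSet
    rintro x ⟨a, rfl⟩
    simp only [Finset.coe_image, Set.mem_image, Finset.mem_coe, Finset.mem_powerset]
    refine ⟨(Vfin op f g a).toFinset, ?_, rfl⟩
    intro y hy
    rw [Set.Finite.mem_toFinset] at hy ⊢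
    obtain ⟨b, c, _, rfl⟩ := hy
    exact Set.mem_image2_of_mem ⟨b, rfl⟩ ⟨c, rfl⟩
  · intro a a' hne
    apply st_inj
    rw [st_inf, st_conv, st_conv, st_bot]
    ext p
    simp only [Set.mem_inter_iff, Set.mem_setOf_eq, Set.mem_empty_iff_false, iff_false, not_and]
    intro h h'
    exact hne (h ▸ h')
  · constructor
    · rintro x ⟨a, rfl⟩; exact le_top
    · intro v hv
      apply le_of_st
      rw [st_top]
      intro p _
      have h1 : conv op f g (op (Phi f p) (Phi g p)) ≤ v :=
        hv (Set.mem_range_self _)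
      apply st_mono h1
      rw [st_conv]
      rfl

lemma Phi_conv :
    Phi (⟨conv op f g, conv_isBPFn op f g⟩ : DBStar D B) =
      fun p => op (Phi f p) (Phi g p) := by
  funext p
  have h1 : p ∈ st (conv op f g (op (Phi f p) (Phi g p))) := by
    rw [st_conv]; rfl
  rw [st_fiber (conv op f g) (conv_isBPFn op f g)] at h1
  exact h1

end Conv

section Delta

noncomputable def delta (d₀ : D) : D → B := fun d => if d = d₀ then ⊤ else ⊥

lemma delta_isBPFn (d₀ : D) : IsBPFn D B (delta d₀) := by
  refine ⟨?_, ?_, ?_⟩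
  · apply Set.Finite.subset ((Set.finite_singleton (⊥ : B)).insert ⊤)
    rintro x ⟨d, rfl⟩
    by_cases h : d = d₀ <;> simp [delta, h]
  · intro a b hne
    by_cases ha : a = d₀
    · have hb : b ≠ d₀ := fun h => hne (ha.trans h.symm)
      simp [delta, hb]
    · simp [delta, ha]
  · constructor
    · rintro x ⟨d, rfl⟩; exact le_top
    · intro v hv
      have : delta d₀ d₀ ≤ v := hv ⟨d₀, rfl⟩
      simpa [delta] using this

lemma Phi_delta (d₀ : D) :
    Phi (⟨delta d₀, delta_isBPFn d₀⟩ : DBStar D B) = fun _ => d₀ := by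
  funext p
  have h1 : p ∈ st (delta (B := B) d₀ d₀) := by
    simp [delta, st_top]
  rw [st_fiber (delta d₀) (delta_isBPFn d₀)] at h1
  exact h1

end Delta

/-- The image of `Φ` as a subalgebra of the function algebra. -/
noncomputable def RS : Subalgebra D (Sp B → D) where
  carrier := Set.range (Phi (D := D) (B := B))
  mul_mem' := by
    rintro _ _ ⟨f, rfl⟩ ⟨g, rfl⟩
    exact ⟨⟨conv (· * ·) f g, conv_isBPFn _ f g⟩, by rw [Phi_conv]; rfl⟩
  add_mem' := by
    rintro _ _ ⟨f, rfl⟩ ⟨g, rfl⟩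
    exact ⟨⟨conv (· + ·) f g, conv_isBPFn _ f g⟩, by rw [Phi_conv]; rfl⟩
  algebraMap_mem' := fun d =>
    ⟨⟨delta d, delta_isBPFn d⟩, by rw [Phi_delta]; rfl⟩

lemma mem_RS {x : Sp B → D} (h : x ∈ RS (D := D) (B := B)) :
    ∃ f : DBStar D B, Phi f = x := h

/-- The equivalence between the boolean power and the subalgebra. -/
noncomputable def eqv : DBStar D B ≃ RS (D := D) (B := B) where
  toFun f := ⟨Phi f, ⟨f, rfl⟩⟩
  invFun x := (mem_RS x.2).choose
  left_inv f := Phi_inj (mem_RS (⟨Phi f, ⟨f, rfl⟩⟩ : RS (D := D) (B := B)).2).choose_spec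
  right_inv x := Subtype.ext (mem_RS x.2).choose_spec

end BPAux
/-- Foster's boolean power `D[B]*` is a commutative unital `D`-algebra,
with operations given by the boolean-power formulas (as least upper bounds). -/
theorem statement1 (D B : Type*) [CommRing D] [IsDomain D] [BooleanAlgebra B] :
    ∃ (iR : CommRing (DBStar D B)),
      ∃ (iA : @Algebra D (DBStar D B) _ iR.toSemiring),
        @FosterOps D B _ _ iR iA := by
  classical
  letI e := BPAux.eqv (D := D) (B := B)
  letI iR : CommRing (DBStar D B) := e.commRing
  have Phi_symm : ∀ z : BPAux.RS (D := D) (B := B), BPAux.Phi (e.symm z) = z.1 :=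
    fun z => congrArg Subtype.val (e.apply_symm_apply z)
  have Phi_mul : ∀ x y : DBStar D B,
      BPAux.Phi (x * y) = fun p => BPAux.Phi x p * BPAux.Phi y p := by
    intro x y
    show BPAux.Phi (e.symm (e x * e y)) = _
    rw [Phi_symm]
    rfl
  have Phi_add : ∀ x y : DBStar D B,
      BPAux.Phi (x + y) = fun p => BPAux.Phi x p + BPAux.Phi y p := by
    intro x y
    show BPAux.Phi (e.symm (e x + e y)) = _
    rw [Phi_symm]
    rfl
  letI ψ : D →+* DBStar D B :=
    { toFun := fun d => e.symm (algebraMap D (BPAux.RS (D := D) (B := B)) d)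
      map_one' := congrArg e.symm ((algebraMap D (BPAux.RS (D := D) (B := B))).map_one)
      map_zero' := congrArg e.symm ((algebraMap D (BPAux.RS (D := D) (B := B))).map_zero)
      map_mul' := fun d₁ d₂ => by
        show e.symm _ = e.symm (e (e.symm _) * e (e.symm _))
        rw [e.apply_symm_apply, e.apply_symm_apply,
          (algebraMap D (BPAux.RS (D := D) (B := B))).map_mul]
      map_add' := fun d₁ d₂ => by
        show e.symm _ = e.symm (e (e.symm _) + e (e.symm _))
        rw [e.apply_symm_apply, e.apply_symm_apply,
          (algebraMap D (BPAux.RS (D := D) (B := B))).map_add] }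
  letI iA : Algebra D (DBStar D B) := ψ.toAlgebra
  have Phi_smul : ∀ (b : D) (x : DBStar D B),
      BPAux.Phi (b • x) = fun p => b * BPAux.Phi x p := by
    intro b x
    have h1 : b • x = ψ b * x := Algebra.smul_def b x
    rw [h1, Phi_mul]
    have h2 : BPAux.Phi (ψ b) = fun _ => b := by
      show BPAux.Phi (e.symm _) = _
      rw [Phi_symm]
      rfl
    rw [h2]
  refine ⟨iR, iA, ?_, ?_, ?_⟩
  · -- addition
    intro f g a
    have key : BPAux.st ((f + g).1 a) =
        {p | BPAux.Phi f p + BPAux.Phi g p = a} := by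
      rw [BPAux.st_fiber (f + g).1 (f + g).2 a]
      ext p
      simp only [Set.mem_setOf_eq]
      rw [show BPAux.phi (f + g).1 (f + g).2 p = BPAux.Phi f p + BPAux.Phi g p from
        congrFun (Phi_add f g) p]
    constructor
    · rintro x ⟨b, c, hbc, rfl⟩
      apply BPAux.le_of_st
      rw [BPAux.st_inf, BPAux.st_fiber f.1 f.2, BPAux.st_fiber g.1 g.2, key]
      rintro p ⟨hb, hc⟩
      simp only [Set.mem_setOf_eq] at hb hc ⊢
      rw [show BPAux.Phi f p = b from hb, show BPAux.Phi g p = c from hc]; exact hbc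
    · intro v hv
      apply BPAux.le_of_st
      rw [key]
      intro p hp
      have hx : f.1 (BPAux.Phi f p) ⊓ g.1 (BPAux.Phi g p) ∈
          {x : B | ∃ b c : D, b + c = a ∧ x = f.1 b ⊓ g.1 c} := ⟨_, _, hp, rfl⟩
      apply BPAux.st_mono (hv hx)
      rw [BPAux.st_inf, BPAux.st_fiber f.1 f.2, BPAux.st_fiber g.1 g.2]
      exact ⟨rfl, rfl⟩
  · -- multiplication
    intro f g a
    have key : BPAux.st ((f * g).1 a) =
        {p | BPAux.Phi f p * BPAux.Phi g p = a} := by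
      rw [BPAux.st_fiber (f * g).1 (f * g).2 a]
      ext p
      simp only [Set.mem_setOf_eq]
      rw [show BPAux.phi (f * g).1 (f * g).2 p = BPAux.Phi f p * BPAux.Phi g p from
        congrFun (Phi_mul f g) p]
    constructor
    · rintro x ⟨b, c, hbc, rfl⟩
      apply BPAux.le_of_st
      rw [BPAux.st_inf, BPAux.st_fiber f.1 f.2, BPAux.st_fiber g.1 g.2, key]
      rintro p ⟨hb, hc⟩
      simp only [Set.mem_setOf_eq] at hb hc ⊢
      rw [show BPAux.Phi f p = b from hb, show BPAux.Phi g p = c from hc]; exact hbc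
    · intro v hv
      apply BPAux.le_of_st
      rw [key]
      intro p hp
      have hx : f.1 (BPAux.Phi f p) ⊓ g.1 (BPAux.Phi g p) ∈
          {x : B | ∃ b c : D, b * c = a ∧ x = f.1 b ⊓ g.1 c} := ⟨_, _, hp, rfl⟩
      apply BPAux.st_mono (hv hx)
      rw [BPAux.st_inf, BPAux.st_fiber f.1 f.2, BPAux.st_fiber g.1 g.2]
      exact ⟨rfl, rfl⟩
  · -- scalar multiplication
    intro b f a
    have key : BPAux.st ((b • f).1 a) = {p | b * BPAux.Phi f p = a} := by
      rw [BPAux.st_fiber (b • f).1 (b • f).2 a]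
      ext p
      simp only [Set.mem_setOf_eq]
      rw [show BPAux.phi (b • f).1 (b • f).2 p = b * BPAux.Phi f p from
        congrFun (Phi_smul b f) p]
    constructor
    · rintro x ⟨c, hbc, rfl⟩
      apply BPAux.le_of_st
      rw [BPAux.st_fiber f.1 f.2, key]
      intro p hp
      simp only [Set.mem_setOf_eq] at hp ⊢
      rw [show BPAux.Phi f p = c from hp]; exact hbc
    · intro v hv
      apply BPAux.le_of_st
      rw [key]
      intro p hp
      have hx : f.1 (BPAux.Phi f p) ∈
          {x : B | ∃ c : D, b * c = a ∧ x = f.1 c} := ⟨_, hp, rfl⟩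
      apply BPAux.st_mono (hv hx)
      rw [BPAux.st_fiber f.1 f.2]
      rfl
end

section
/- Let D be an integral domain and B a boolean algebra. Let D[B] be the quotient of the polynomial ring D[x_e : e ∈ B] by the ideal generated by x_{e∧f} − x_e x_f, x_{e∨f} − (x_e + x_f − x_e x_f), x_{¬e} − (1 − x_e), and x_0, for e, f ∈ B. Then D[B] is a Specker D-algebra and the map e ↦ (class of x_e) is a boolean isomorphism from B onto Id(D[B]). -/
open Finset

open MvPolynomial in
/-- The Bergman–Rota ideal defining `D[B]`. -/
noncomputable def SpeckerIdeal (D B : Type*) [CommRing D] [BooleanAlgebra B] : Ideal (MvPolynomial B D) :=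
  Ideal.span
    ({p | ∃ e f : B, p = X (e ⊓ f) - X e * X f} ∪
     {p | ∃ e f : B, p = X (e ⊔ f) - (X e + X f - X e * X f)} ∪
     {p | ∃ e : B, p = X eᶜ - (1 - X e)} ∪
     {X ⊥})

namespace SpeckerAux

open MvPolynomial

variable {D B : Type*} [CommRing D] [BooleanAlgebra B]

/-- The canonical map `B → D[B]`. -/
noncomputable def sphi (D : Type*) [CommRing D] {B : Type*} [BooleanAlgebra B] (e : B) :
    MvPolynomial B D ⧸ SpeckerIdeal D B :=
  Ideal.Quotient.mk (SpeckerIdeal D B) (X e)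

lemma mk_gen_zero {p : MvPolynomial B D}
    (hp : p ∈ ({p | ∃ e f : B, p = X (e ⊓ f) - X e * X f} ∪
     {p | ∃ e f : B, p = X (e ⊔ f) - (X e + X f - X e * X f)} ∪
     {p | ∃ e : B, p = X eᶜ - (1 - X e)} ∪
     {X ⊥} : Set (MvPolynomial B D))) :
    Ideal.Quotient.mk (SpeckerIdeal D B) p = 0 :=
  Ideal.Quotient.eq_zero_iff_mem.mpr (Ideal.subset_span hp)

lemma sphi_inf (e f : B) : sphi D (e ⊓ f) = sphi D (e : B) * sphi D f := by
  have h := mk_gen_zero (D := D) (B := B)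
    (Set.mem_union_left _ (Set.mem_union_left _ (Set.mem_union_left _ ⟨e, f, rfl⟩)))
  rw [map_sub, map_mul, sub_eq_zero] at h
  exact h

lemma sphi_sup (e f : B) : sphi D (e ⊔ f) = sphi D e + sphi D f - sphi D e * sphi D f := by
  have h := mk_gen_zero (D := D) (B := B)
    (Set.mem_union_left _ (Set.mem_union_left _ (Set.mem_union_right _ ⟨e, f, rfl⟩)))
  rw [map_sub, map_sub, map_add, map_mul, sub_eq_zero] at h
  exact h

lemma sphi_compl (e : B) : sphi D eᶜ = 1 - sphi D e := by
  have h := mk_gen_zero (D := D) (B := B)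
    (Set.mem_union_left _ (Set.mem_union_right _ ⟨e, rfl⟩))
  rw [map_sub, map_sub, map_one, sub_eq_zero] at h
  exact h

lemma sphi_bot : sphi D (⊥ : B) = 0 :=
  mk_gen_zero (Set.mem_union_right _ rfl)

lemma sphi_top : sphi D (⊤ : B) = 1 := by
  have h := sphi_compl (D := D) (⊥ : B)
  rw [compl_bot] at h
  rw [h, sphi_bot, sub_zero]

lemma sphi_idem (e : B) : IsIdempotentElem (sphi D e) := by
  unfold IsIdempotentElem
  rw [← sphi_inf, inf_idem]

lemma sphi_mul_bot {e f : B} (h : e ⊓ f = ⊥) : sphi D e * sphi D f = 0 := by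
  rw [← sphi_inf, h, sphi_bot]

lemma sphi_sup_disj {e f : B} (h : e ⊓ f = ⊥) : sphi D (e ⊔ f) = sphi D e + sphi D f := by
  rw [sphi_sup, sphi_mul_bot h, sub_zero]

lemma sphi_finset_sup {ι : Type*} (s : Finset ι) (g : ι → B)
    (hd : ∀ i ∈ s, ∀ j ∈ s, i ≠ j → g i ⊓ g j = ⊥) :
    sphi D (s.sup g) = ∑ i ∈ s, sphi D (g i) := by
  classical
  induction s using Finset.induction_on with
  | empty => simpa using sphi_bot
  | insert a s ha ih =>
    rw [Finset.sup_insert, Finset.sum_insert ha]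
    have hgs : g a ⊓ s.sup g = ⊥ := by
      rw [Finset.sup_inf_distrib_left]
      refine (Finset.sup_eq_bot_iff _ _).mpr fun i hi => ?_
      exact hd a (Finset.mem_insert_self a s) i (Finset.mem_insert_of_mem hi)
            (fun h => ha (h ▸ hi))
    rw [sphi_sup_disj hgs, ih (fun i hi j hj hij =>
      hd i (Finset.mem_insert_of_mem hi) j (Finset.mem_insert_of_mem hj) hij)]

end SpeckerAux
namespace SpeckerAux

open MvPolynomial Order

variable {B : Type*} [BooleanAlgebra B]

/-- Separation: if `¬ e ≤ f` there is a prime order-ideal containing `f` but not `e`. -/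
lemma exists_prime_ideal {e f : B} (h : ¬ e ≤ f) :
    ∃ J : Order.Ideal B, J.IsPrime ∧ f ∈ J ∧ e ∉ J := by
  have hdisj : Disjoint ((Order.PFilter.principal e : Order.PFilter B) : Set B)
      ((Order.Ideal.principal f : Order.Ideal B) : Set B) := by
    rw [Set.disjoint_left]
    intro x hxF hxI
    exact h (le_trans (Order.PFilter.mem_principal.mp hxF)
      (Order.Ideal.mem_principal.mp hxI))
  obtain ⟨J, hJp, hIJ, hdis⟩ :=
    DistribLattice.prime_ideal_of_disjoint_filter_ideal hdisj
  refine ⟨J, hJp, hIJ (Order.Ideal.mem_principal_self), fun heJ => ?_⟩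
  exact Set.disjoint_left.mp hdis (Order.PFilter.mem_principal.mpr le_rfl) heJ

variable {J : Order.Ideal B}

lemma prime_top_not_mem (hJ : J.IsPrime) : (⊤ : B) ∉ J := by
  intro hT
  exact hJ.toIsProper.ne_univ (Set.eq_univ_of_forall fun x => J.lower le_top hT)

lemma prime_inf_mem (hJ : J.IsPrime) {x y : B} : x ⊓ y ∈ J ↔ x ∈ J ∨ y ∈ J := by
  constructor
  · exact hJ.mem_or_mem
  · rintro (h | h)
    · exact J.lower inf_le_left h
    · exact J.lower inf_le_right h

lemma prime_compl_mem (hJ : J.IsPrime) {x : B} : xᶜ ∈ J ↔ x ∉ J := by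
  constructor
  · intro hc hx
    exact prime_top_not_mem hJ (by rw [← sup_compl_eq_top (x := x)]; exact J.sup_mem hx hc)
  · intro hx
    rcases hJ.mem_or_compl_mem (x := x) with h | h
    · exact absurd h hx
    · exact h

variable (D : Type*) [CommRing D]

open Classical in
/-- Evaluation of a variable at a prime ideal. -/
noncomputable def pev (x : B) : D := if x ∈ J then 0 else 1

lemma pev_mem {x : B} (hx : x ∈ J) : pev (J := J) D x = 0 := by simp [pev, hx]
lemma pev_not_mem {x : B} (hx : x ∉ J) : pev (J := J) D x = 1 := by simp [pev, hx]

lemma pev_inf (hJ : J.IsPrime) (x y : B) :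
    pev (J := J) D (x ⊓ y) = pev (J := J) D x * pev (J := J) D y := by
  by_cases hx : x ∈ J <;> by_cases hy : y ∈ J <;>
    simp [pev, hx, hy, prime_inf_mem hJ]

lemma pev_sup (x y : B) :
    pev (J := J) D (x ⊔ y) =
      pev (J := J) D x + pev (J := J) D y - pev (J := J) D x * pev (J := J) D y := by
  by_cases hx : x ∈ J <;> by_cases hy : y ∈ J <;>
    simp [pev, hx, hy, Order.Ideal.sup_mem_iff]

lemma pev_compl (hJ : J.IsPrime) (x : B) : pev (J := J) D xᶜ = 1 - pev (J := J) D x := by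
  by_cases hx : x ∈ J <;> simp [pev, hx, prime_compl_mem hJ]

lemma pev_bot : pev (J := J) D (⊥ : B) = 0 := pev_mem D J.bot_mem

/-- The evaluation algebra homomorphism `D[B] →ₐ[D] D` attached to a prime ideal. -/
noncomputable def peval (hJ : J.IsPrime) : (MvPolynomial B D ⧸ SpeckerIdeal D B) →ₐ[D] D := by
  refine Ideal.Quotient.liftₐ _ (aeval (pev (J := J) D)) ?_
  intro p hp
  rw [← RingHom.mem_ker]
  refine Ideal.span_le.mpr ?_ hp
  rintro q (((⟨e, f, rfl⟩ | ⟨e, f, rfl⟩) | ⟨e, rfl⟩) | rfl)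
  · simp [RingHom.mem_ker, pev_inf D hJ]
  · simp [RingHom.mem_ker, pev_sup]
  · simp [RingHom.mem_ker, pev_compl D hJ]
  · simp [RingHom.mem_ker, pev_bot]

lemma peval_sphi (hJ : J.IsPrime) (e : B) :
    peval D hJ (sphi D e) = pev (J := J) D e := by
  simp [peval, sphi, Ideal.Quotient.liftₐ_apply, Ideal.Quotient.lift_mk]

end SpeckerAux
namespace SpeckerAux

open MvPolynomial

variable {D B : Type*} [CommRing D] [BooleanAlgebra B]

lemma adjoin_range_sphi : Algebra.adjoin D (Set.range (sphi D (B := B))) = ⊤ := by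
  have h1 : Set.range (sphi D (B := B)) =
      (Ideal.Quotient.mkₐ D (SpeckerIdeal D B)) '' (Set.range (X : B → MvPolynomial B D)) := by
    rw [← Set.range_comp]; rfl
  rw [h1, ← AlgHom.map_adjoin, MvPolynomial.adjoin_range_X, Algebra.map_top]
  rw [AlgHom.range_eq_top]
  exact Ideal.Quotient.mkₐ_surjective D _

/-- The range of `sphi` is a submonoid. -/
noncomputable def sphiMonoid (D B : Type*) [CommRing D] [BooleanAlgebra B] :
    Submonoid (MvPolynomial B D ⧸ SpeckerIdeal D B) where
  carrier := Set.range (sphi D)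
  one_mem' := ⟨⊤, sphi_top⟩
  mul_mem' := by rintro _ _ ⟨e, rfl⟩ ⟨f, rfl⟩; exact ⟨e ⊓ f, sphi_inf e f⟩

lemma span_range_sphi : Submodule.span D (Set.range (sphi D (B := B))) = ⊤ := by
  have h := Algebra.adjoin_eq_span (R := D) (s := Set.range (sphi D (B := B)))
  have hc : (Submonoid.closure (Set.range (sphi D (B := B))) : Set _) =
      Set.range (sphi D (B := B)) := by
    rw [show Set.range (sphi D (B := B)) = (sphiMonoid D B : Set _) from rfl,
      Submonoid.closure_eq]
  rw [adjoin_range_sphi, hc] at h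
  rw [← h]
  rfl

lemma exists_finsupp (s : MvPolynomial B D ⧸ SpeckerIdeal D B) :
    ∃ c : B →₀ D, s = ∑ e ∈ c.support, c e • sphi D e := by
  have hs : s ∈ Submodule.span D (Set.range (sphi D (B := B))) := by
    rw [span_range_sphi]; trivial
  obtain ⟨c, hc⟩ := Finsupp.mem_span_range_iff_exists_finsupp.mp hs
  exact ⟨c, by rw [← hc]; rfl⟩

section Atoms

variable [DecidableEq B]

/-- The atom of the finite boolean subalgebra generated by `t` attached to `σ ⊆ t`. -/
def atomOf (t σ : Finset B) : B := σ.inf id ⊓ (t \ σ).inf compl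

lemma atom_le_of_mem {t σ : Finset B} {e : B} (he : e ∈ σ) : atomOf t σ ≤ e :=
  le_trans inf_le_left (Finset.inf_le he)

lemma atom_le_compl {t σ : Finset B} {e : B} (he : e ∈ t) (hne : e ∉ σ) : atomOf t σ ≤ eᶜ :=
  le_trans inf_le_right (Finset.inf_le (Finset.mem_sdiff.mpr ⟨he, hne⟩))

lemma atom_disjoint_of_mem {t σ τ : Finset B} (hσ : σ ⊆ t) {e : B} (he : e ∈ σ)
    (hne : e ∉ τ) : atomOf t σ ⊓ atomOf t τ = ⊥ := by
  refine le_bot_iff.mp (le_trans (inf_le_inf (atom_le_of_mem he)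
    (atom_le_compl (hσ he) hne)) ?_)
  rw [inf_compl_eq_bot]

lemma atom_disjoint {t σ τ : Finset B} (hσ : σ ⊆ t) (hτ : τ ⊆ t) (hne : σ ≠ τ) :
    atomOf t σ ⊓ atomOf t τ = ⊥ := by
  have : ∃ e, ¬ (e ∈ σ ↔ e ∈ τ) := by
    by_contra h
    push_neg at h
    exact hne (Finset.ext fun a => h a)
  obtain ⟨e, he⟩ := this
  rw [iff_iff_implies_and_implies, not_and_or] at he
  rcases he with he | he
  · push_neg at he
    exact atom_disjoint_of_mem hσ he.1 he.2
  · push_neg at he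
    rw [inf_comm]
    exact atom_disjoint_of_mem hτ he.1 he.2

lemma atom_cover (t : Finset B) : t.powerset.sup (atomOf t) = ⊤ := by
  induction t using Finset.induction_on with
  | empty => simp [atomOf]
  | insert a t ha ih =>
    have h1 : ∀ σ ∈ t.powerset, atomOf (insert a t) σ = atomOf t σ ⊓ aᶜ := by
      intro σ hσ
      have haσ : a ∉ σ := fun h => ha (Finset.mem_powerset.mp hσ h)
      have hsd : (insert a t) \ σ = insert a (t \ σ) := by
        ext x
        simp only [Finset.mem_sdiff, Finset.mem_insert]
        constructor
        · rintro ⟨h1 | h1, h2⟩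
          · exact Or.inl h1
          · exact Or.inr ⟨h1, h2⟩
        · rintro (rfl | ⟨h1, h2⟩)
          · exact ⟨Or.inl rfl, haσ⟩
          · exact ⟨Or.inr h1, h2⟩
      rw [atomOf, hsd, Finset.inf_insert]
      show σ.inf id ⊓ (aᶜ ⊓ (t \ σ).inf compl) = σ.inf id ⊓ (t \ σ).inf compl ⊓ aᶜ
      rw [inf_comm (aᶜ), inf_assoc]
    have h2 : ∀ σ ∈ t.powerset, atomOf (insert a t) (insert a σ) = a ⊓ atomOf t σ := by
      intro σ hσ
      have hσt : σ ⊆ t := Finset.mem_powerset.mp hσ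
      have haσ : a ∉ σ := fun h => ha (hσt h)
      have hsd : (insert a t) \ (insert a σ) = t \ σ := by
        ext x
        simp only [Finset.mem_sdiff, Finset.mem_insert, not_or]
        constructor
        · rintro ⟨h1 | h1, h2, h3⟩
          · exact absurd h1 h2
          · exact ⟨h1, h3⟩
        · rintro ⟨h1, h2⟩
          exact ⟨Or.inr h1, fun h => ha (h ▸ h1), h2⟩
      rw [atomOf, hsd, Finset.inf_insert]
      show (a ⊓ σ.inf id) ⊓ (t \ σ).inf compl = a ⊓ (σ.inf id ⊓ (t \ σ).inf compl)
      rw [inf_assoc]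
    have h2' : ∀ σ ∈ t.powerset, (atomOf (insert a t) ∘ insert a) σ = a ⊓ atomOf t σ := h2
    rw [Finset.powerset_insert, Finset.sup_union, Finset.sup_image,
      Finset.sup_congr rfl h1,
      Finset.sup_congr rfl h2',
      ← Finset.sup_inf_distrib_right, ← Finset.sup_inf_distrib_left, ih,
      top_inf_eq, inf_top_eq, compl_sup_eq_top]

lemma eq_sup_atoms {t : Finset B} {e : B} (he : e ∈ t) :
    e = (t.powerset.filter (fun σ => e ∈ σ)).sup (atomOf t) := by
  have hcov := atom_cover t
  have hA : (t.powerset.filter (fun σ => e ∈ σ)).sup (fun σ => e ⊓ atomOf t σ) =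
      (t.powerset.filter (fun σ => e ∈ σ)).sup (atomOf t) := by
    refine Finset.sup_congr rfl fun σ hσ => ?_
    exact inf_eq_right.mpr (atom_le_of_mem (Finset.mem_filter.mp hσ).2)
  have hB : (t.powerset.filter (fun σ => ¬ e ∈ σ)).sup (fun σ => e ⊓ atomOf t σ) = ⊥ := by
    refine (Finset.sup_eq_bot_iff _ _).mpr fun σ hσ => ?_
    obtain ⟨hσp, hne⟩ := Finset.mem_filter.mp hσ
    have := atom_le_compl (σ := σ) he hne
    refine le_bot_iff.mp (le_trans (inf_le_inf le_rfl this) ?_)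
    rw [inf_compl_eq_bot]
  have hsplit : t.powerset.sup (fun σ => e ⊓ atomOf t σ) =
      (t.powerset.filter (fun σ => e ∈ σ)).sup (atomOf t) := by
    rw [← Finset.filter_union_filter_not_eq (fun σ => e ∈ σ) t.powerset, Finset.sup_union,
      hA, hB, sup_bot_eq, Finset.filter_union_filter_not_eq]
  rw [← hsplit, ← Finset.sup_inf_distrib_left, hcov, inf_top_eq]

lemma sphi_eq_sum_atoms (D : Type*) [CommRing D] {t : Finset B} {e : B} (he : e ∈ t) :
    sphi D e = ∑ σ ∈ t.powerset.filter (fun σ => e ∈ σ), sphi D (atomOf t σ) := by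
  conv_lhs => rw [eq_sup_atoms he]
  refine sphi_finset_sup _ _ fun σ hσ τ hτ hne => ?_
  exact atom_disjoint (Finset.mem_powerset.mp (Finset.mem_filter.mp hσ).1)
    (Finset.mem_powerset.mp (Finset.mem_filter.mp hτ).1) hne

lemma exists_normal_form (s : MvPolynomial B D ⧸ SpeckerIdeal D B) :
    ∃ (t : Finset B) (b : Finset B → D),
      s = ∑ σ ∈ t.powerset, b σ • sphi D (atomOf t σ) := by
  obtain ⟨c, rfl⟩ := exists_finsupp s
  refine ⟨c.support, fun σ => ∑ e ∈ σ, c e, ?_⟩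
  calc ∑ e ∈ c.support, c e • sphi D e
      = ∑ e ∈ c.support, ∑ σ ∈ c.support.powerset.filter (fun σ => e ∈ σ),
          c e • sphi D (atomOf c.support σ) := by
        refine Finset.sum_congr rfl fun e he => ?_
        rw [sphi_eq_sum_atoms D he, Finset.smul_sum]
    _ = ∑ e ∈ c.support, ∑ σ ∈ c.support.powerset,
          if e ∈ σ then c e • sphi D (atomOf c.support σ) else 0 := by
        refine Finset.sum_congr rfl fun e _ => ?_
        rw [Finset.sum_filter]
    _ = ∑ σ ∈ c.support.powerset, ∑ e ∈ c.support,
          if e ∈ σ then c e • sphi D (atomOf c.support σ) else 0 := Finset.sum_comm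
    _ = ∑ σ ∈ c.support.powerset, (∑ e ∈ σ, c e) • sphi D (atomOf c.support σ) := by
        refine Finset.sum_congr rfl fun σ hσ => ?_
        rw [← Finset.sum_filter, Finset.filter_mem_eq_inter,
          Finset.inter_eq_right.mpr (Finset.mem_powerset.mp hσ), Finset.sum_smul]

end Atoms

end SpeckerAux
namespace SpeckerAux

open MvPolynomial

variable {D B : Type*} [CommRing D] [BooleanAlgebra B]

lemma coeffs_vanish {ι : Type*} (P : Finset ι) (g : ι → B)
    (hd : ∀ i ∈ P, ∀ j ∈ P, i ≠ j → g i ⊓ g j = ⊥) (b : ι → D)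
    (h : ∑ i ∈ P, b i • sphi D (g i) = 0) :
    ∀ i ∈ P, g i ≠ ⊥ → b i = 0 := by
  classical
  intro i hi hne
  have hle : ¬ g i ≤ (⊥ : B) := fun hle => hne (le_bot_iff.mp hle)
  obtain ⟨J, hJ, -, hgi⟩ := exists_prime_ideal hle
  have h0 := congrArg (peval D hJ) h
  rw [map_sum, map_zero] at h0
  have hterm : ∀ j ∈ P, peval D hJ (b j • sphi D (g j)) = if j = i then b j else 0 := by
    intro j hj
    rw [map_smul, peval_sphi, smul_eq_mul]
    split_ifs with hji
    · subst hji; rw [pev_not_mem D hgi, mul_one]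
    · have hmem : g j ∈ J := by
        rcases (prime_inf_mem hJ).mp
            (show g j ⊓ g i ∈ J by rw [hd j hj i hi hji]; exact J.bot_mem) with h' | h'
        · exact h'
        · exact absurd h' hgi
      rw [pev_mem D hmem, mul_zero]
  rw [Finset.sum_congr rfl hterm, Finset.sum_ite_eq' P i (fun j => b j), if_pos hi] at h0
  exact h0

lemma sphi_ne [Nontrivial D] {e f : B} (h : ¬ e ≤ f) : sphi D e ≠ sphi D f := by
  intro heq
  obtain ⟨J, hJ, hf, he⟩ := exists_prime_ideal h
  have h0 := congrArg (peval D hJ) heq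
  rw [peval_sphi, peval_sphi, pev_not_mem D he, pev_mem D hf] at h0
  exact one_ne_zero h0

lemma sphi_injective [Nontrivial D] : Function.Injective (sphi D (B := B)) := by
  intro e f heq
  by_contra hne
  rcases (not_and_or.mp (fun hc : e ≤ f ∧ f ≤ e => hne (le_antisymm hc.1 hc.2))) with h | h
  · exact sphi_ne h heq
  · exact sphi_ne h heq.symm

end SpeckerAux
namespace SpeckerAux

open MvPolynomial

variable {D B : Type*} [CommRing D] [IsDomain D] [BooleanAlgebra B]

lemma torsion_free : SpTorsionFree D (MvPolynomial B D ⧸ SpeckerIdeal D B) := by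
  classical
  intro a s has
  by_cases ha : a = 0
  · exact Or.inl ha
  right
  obtain ⟨t, b, rfl⟩ := exists_normal_form s
  have hd : ∀ σ ∈ t.powerset, ∀ τ ∈ t.powerset, σ ≠ τ →
      atomOf t σ ⊓ atomOf t τ = ⊥ := fun σ hσ τ hτ hne =>
    atom_disjoint (Finset.mem_powerset.mp hσ) (Finset.mem_powerset.mp hτ) hne
  rw [Finset.smul_sum] at has
  simp_rw [smul_smul] at has
  refine Finset.sum_eq_zero fun σ hσ => ?_
  by_cases hbot : atomOf t σ = ⊥
  · rw [hbot, sphi_bot, smul_zero]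
  · have hz := coeffs_vanish _ _ hd _ has σ hσ hbot
    rcases mul_eq_zero.mp hz with h | h
    · exact absurd h ha
    · rw [h, zero_smul]

omit [IsDomain D] in
lemma idem_generated : SpIdemGenerated D (MvPolynomial B D ⧸ SpeckerIdeal D B) := by
  unfold SpIdemGenerated
  rw [← top_le_iff, ← adjoin_range_sphi (D := D) (B := B)]
  exact Algebra.adjoin_mono (by rintro _ ⟨e, rfl⟩; exact sphi_idem e)

lemma idem_surjective (x : MvPolynomial B D ⧸ SpeckerIdeal D B)
    (hx : IsIdempotentElem x) : ∃ e : B, sphi D e = x := by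
  classical
  obtain ⟨t, b, hxe⟩ := exists_normal_form x
  set P := t.powerset with hP
  have hd : ∀ σ ∈ P, ∀ τ ∈ P, σ ≠ τ → atomOf t σ ⊓ atomOf t τ = ⊥ := fun σ hσ τ hτ hne =>
    atom_disjoint (Finset.mem_powerset.mp hσ) (Finset.mem_powerset.mp hτ) hne
  have hsq : x * x = ∑ σ ∈ P, (b σ * b σ) • sphi D (atomOf t σ) := by
    rw [hxe, Finset.sum_mul_sum]
    refine Finset.sum_congr rfl fun σ hσ => ?_
    rw [Finset.sum_eq_single_of_mem σ hσ]
    · rw [smul_mul_assoc, mul_smul_comm, smul_smul]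
      have : sphi D (atomOf t σ) * sphi D (atomOf t σ) = sphi D (atomOf t σ) :=
        sphi_idem (atomOf t σ)
      simp only [this]
    · intro τ hτ hne
      rw [smul_mul_assoc, mul_smul_comm]
      rw [sphi_mul_bot (hd σ hσ τ hτ (fun h => hne h.symm))]
      rw [smul_zero, smul_zero]
  have h0 : ∑ σ ∈ P, (b σ * b σ - b σ) • sphi D (atomOf t σ) = 0 := by
    simp_rw [sub_smul]
    rw [Finset.sum_sub_distrib, ← hsq, ← hxe, hx]
    exact sub_self x
  have hbool : ∀ σ ∈ P, atomOf t σ ≠ ⊥ → b σ = 0 ∨ b σ = 1 := by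
    intro σ hσ hne
    have hz := coeffs_vanish P (atomOf t) hd _ h0 σ hσ hne
    have hb : b σ * (b σ - 1) = 0 := by ring_nf; ring_nf at hz; linear_combination hz
    rcases mul_eq_zero.mp hb with h | h
    · exact Or.inl h
    · exact Or.inr (by linear_combination h)
  refine ⟨(P.filter (fun σ => b σ = 1 ∧ atomOf t σ ≠ ⊥)).sup (atomOf t), ?_⟩
  have hsub : P.filter (fun σ => b σ = 1 ∧ atomOf t σ ≠ ⊥) ⊆ P := Finset.filter_subset _ _
  rw [sphi_finset_sup _ _ (fun σ hσ τ hτ hne => hd σ (hsub hσ) τ (hsub hτ) hne)]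
  calc ∑ σ ∈ P.filter (fun σ => b σ = 1 ∧ atomOf t σ ≠ ⊥), sphi D (atomOf t σ)
      = ∑ σ ∈ P.filter (fun σ => b σ = 1 ∧ atomOf t σ ≠ ⊥), b σ • sphi D (atomOf t σ) := by
        refine Finset.sum_congr rfl fun σ hσ => ?_
        rw [(Finset.mem_filter.mp hσ).2.1, one_smul]
    _ = ∑ σ ∈ P, b σ • sphi D (atomOf t σ) := by
        refine Finset.sum_subset hsub fun σ hσ hnσ => ?_
        rw [Finset.mem_filter, not_and] at hnσ
        by_cases hbot : atomOf t σ = ⊥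
        · simp only [hbot, sphi_bot, smul_zero]
        · rcases hbool σ hσ hbot with h | h
          · rw [h, zero_smul]
          · exact absurd hbot (by simpa [h] using hnσ hσ)
    _ = x := hxe.symm

end SpeckerAux
/-- `D[B]` is a Specker `D`-algebra and `e ↦ [x_e]` is a boolean
isomorphism of `B` onto the idempotents of `D[B]`. -/
theorem statement3 (D B : Type*) [CommRing D] [IsDomain D] [BooleanAlgebra B] :
    IsSpecker D (MvPolynomial B D ⧸ SpeckerIdeal D B) ∧
    (let φ : B → MvPolynomial B D ⧸ SpeckerIdeal D B :=
      fun e => Ideal.Quotient.mk (SpeckerIdeal D B) (MvPolynomial.X e)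
     (∀ e, IsIdempotentElem (φ e)) ∧
     Function.Injective φ ∧
     (∀ x, IsIdempotentElem x → ∃ e, φ e = x) ∧
     (∀ e f, φ (e ⊓ f) = φ e * φ f) ∧
     (∀ e f, φ (e ⊔ f) = φ e + φ f - φ e * φ f) ∧
     (∀ e, φ eᶜ = 1 - φ e) ∧
     φ ⊥ = 0 ∧ φ ⊤ = 1) :=
  ⟨⟨SpeckerAux.torsion_free, SpeckerAux.idem_generated⟩,
    SpeckerAux.sphi_idem, SpeckerAux.sphi_injective, SpeckerAux.idem_surjective,
    SpeckerAux.sphi_inf, SpeckerAux.sphi_sup, SpeckerAux.sphi_compl,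
    SpeckerAux.sphi_bot, SpeckerAux.sphi_top⟩
end

section
/- Let D be a totally ordered integral domain and S a Specker D-algebra. Define P ⊆ S to be the set of elements having an orthogonal decomposition with all coefficients nonnegative. Then P ∩ (−P) = {0}, and P is closed under addition, multiplication, and multiplication by nonnegative scalars from D. -/
open Finset

section Aux

variable {D S : Type*} [CommRing D] [LinearOrder D] [IsStrictOrderedRing D] [CommRing S] [Algebra D S]

lemma aux_orth_mul_eq {ι : Type*} [Fintype ι] [DecidableEq ι] (c : ι → D) (g : ι → S)
    (hid : ∀ i, IsIdempotentElem (g i)) (horth : ∀ i j, i ≠ j → g i * g j = 0) (k : ι) :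
    (∑ i, c i • g i) * g k = c k • g k := by
  rw [Finset.sum_mul, Finset.sum_eq_single k]
  · rw [smul_mul_assoc, hid k]
  · intro b _ hbk; rw [smul_mul_assoc, horth b k hbk, smul_zero]
  · simp

/-- Any nonnegative orthogonal decomposition can be completed so idempotents sum to 1. -/
lemma aux_complete (s : S) (h : OrthNonnegDecomp D S s) :
    ∃ (n : ℕ) (a : Fin n → D) (e : Fin n → S),
      (∀ i, 0 ≤ a i) ∧ (∀ i, IsIdempotentElem (e i)) ∧
      (∀ i j, i ≠ j → e i * e j = 0) ∧ (∑ i, e i = 1) ∧ s = ∑ i, a i • e i := by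
  obtain ⟨n, a, e, h0, hid, horth, hs⟩ := h
  set E : S := ∑ i, e i with hE
  have hEe : ∀ j, E * e j = e j := by
    intro j
    rw [hE, Finset.sum_mul, Finset.sum_eq_single j]
    · exact hid j
    · intro b _ hbj; exact horth b j hbj
    · simp
  have hEE : IsIdempotentElem E := by
    show E * E = E
    rw [hE, Finset.mul_sum]
    simp only [← hE, hEe]
  have hcompl : ∀ j, (1 - E) * e j = 0 := by
    intro j; rw [sub_mul, one_mul, hEe, sub_self]
  refine ⟨n + 1, Fin.cons 0 a, Fin.cons (1 - E) e, ?_, ?_, ?_, ?_, ?_⟩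
  · intro i
    rcases Fin.eq_zero_or_eq_succ i with h | ⟨j, h⟩ <;> subst h <;> simp [h0]
  · intro i
    rcases Fin.eq_zero_or_eq_succ i with h | ⟨j, h⟩ <;> subst h
    · simpa using hEE.one_sub
    · simpa using hid j
  · intro i j hij
    rcases Fin.eq_zero_or_eq_succ i with h | ⟨i', h⟩ <;> subst h <;>
      rcases Fin.eq_zero_or_eq_succ j with h | ⟨j', h⟩ <;> subst h
    · exact absurd rfl hij
    · simpa using hcompl j'
    · rw [Fin.cons_succ, Fin.cons_zero, mul_comm]; exact hcompl i'
    · rw [Fin.cons_succ, Fin.cons_succ]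
      exact horth i' j' (fun h => hij (by rw [h]))
  · rw [Fin.sum_cons, ← hE, sub_add_cancel]
  · rw [Fin.sum_univ_succ]
    simp [hs]

/-- Package a doubly-indexed orthogonal family into an `OrthNonnegDecomp`. -/
lemma aux_pack {n m : ℕ} (A : Fin n → Fin m → D) (E : Fin n → Fin m → S) (s : S)
    (h0 : ∀ i j, 0 ≤ A i j) (hid : ∀ i j, IsIdempotentElem (E i j))
    (horth : ∀ p q : Fin n × Fin m, p ≠ q → E p.1 p.2 * E q.1 q.2 = 0)
    (hs : s = ∑ i, ∑ j, A i j • E i j) : OrthNonnegDecomp D S s := by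
  refine ⟨n * m, fun k => A (finProdFinEquiv.symm k).1 (finProdFinEquiv.symm k).2,
    fun k => E (finProdFinEquiv.symm k).1 (finProdFinEquiv.symm k).2,
    fun k => h0 _ _, fun k => hid _ _, ?_, ?_⟩
  · intro i j hij
    exact horth _ _ (fun h => hij (finProdFinEquiv.symm.injective h))
  · have h1 : ∑ p : Fin n × Fin m, A p.1 p.2 • E p.1 p.2 = ∑ i, ∑ j, A i j • E i j :=
      Fintype.sum_prod_type _
    rw [hs, ← h1]
    exact Fintype.sum_equiv finProdFinEquiv.symm _ _ (fun k => rfl) |>.symm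

lemma aux_prod_idem {n m : ℕ} {e : Fin n → S} {f : Fin m → S}
    (hide : ∀ i, IsIdempotentElem (e i)) (hidf : ∀ j, IsIdempotentElem (f j))
    (i : Fin n) (j : Fin m) : IsIdempotentElem (e i * f j) := by
  show (e i * f j) * (e i * f j) = e i * f j
  have : (e i * f j) * (e i * f j) = (e i * e i) * (f j * f j) := by ring
  rw [this, hide i, hidf j]

lemma aux_prod_orth {n m : ℕ} {e : Fin n → S} {f : Fin m → S}
    (horthe : ∀ i j, i ≠ j → e i * e j = 0) (horthf : ∀ i j, i ≠ j → f i * f j = 0)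
    (p q : Fin n × Fin m) (hpq : p ≠ q) :
    (e p.1 * f p.2) * (e q.1 * f q.2) = 0 := by
  have key : (e p.1 * f p.2) * (e q.1 * f q.2) = (e p.1 * e q.1) * (f p.2 * f q.2) := by ring
  rw [key]
  by_cases h : p.1 = q.1
  · have h2 : p.2 ≠ q.2 := fun h2 => hpq (Prod.ext h h2)
    rw [horthf _ _ h2, mul_zero]
  · rw [horthe _ _ h, zero_mul]

/-- Expand a decomposition along a second partition of unity. -/
lemma aux_expand {n m : ℕ} (a : Fin n → D) (e : Fin n → S) (f : Fin m → S)
    (hfs : ∑ j, f j = 1) (s : S) (hs : s = ∑ i, a i • e i) :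
    s = ∑ i, ∑ j, a i • (e i * f j) := by
  rw [hs]
  refine Finset.sum_congr rfl fun i _ => ?_
  rw [← Finset.smul_sum, ← Finset.mul_sum, hfs, mul_one]

end Aux

/-- the positive cone `P` of elements with nonnegative orthogonal
decompositions satisfies `P ∩ (−P) = {0}` and is closed under `+`, `*`, and
nonnegative scalar multiplication. -/
theorem statement4 (D S : Type*) [CommRing D] [LinearOrder D] [IsStrictOrderedRing D] [CommRing S] [Algebra D S]
    (hS : IsSpecker D S) :
    ({s : S | OrthNonnegDecomp D S s} ∩ {s : S | OrthNonnegDecomp D S (-s)} = {0}) ∧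
    (∀ s t : S, OrthNonnegDecomp D S s → OrthNonnegDecomp D S t →
      OrthNonnegDecomp D S (s + t)) ∧
    (∀ s t : S, OrthNonnegDecomp D S s → OrthNonnegDecomp D S t →
      OrthNonnegDecomp D S (s * t)) ∧
    (∀ (a : D) (s : S), 0 ≤ a → OrthNonnegDecomp D S s → OrthNonnegDecomp D S (a • s)) := by
  obtain ⟨htf, -⟩ := hS
  have hadd : ∀ s t : S, OrthNonnegDecomp D S s → OrthNonnegDecomp D S t →
      OrthNonnegDecomp D S (s + t) := by
    intro s t hs ht
    obtain ⟨n, a, e, ha0, hide, horthe, hesum, hsd⟩ := aux_complete s hs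
    obtain ⟨m, b, f, hb0, hidf, horthf, hfsum, htd⟩ := aux_complete t ht
    refine aux_pack (fun i j => a i + b j) (fun i j => e i * f j) _
      (fun i j => add_nonneg (ha0 i) (hb0 j)) (aux_prod_idem hide hidf)
      (aux_prod_orth horthe horthf) ?_
    have hs' : s = ∑ i, ∑ j, a i • (e i * f j) := aux_expand a e f hfsum s hsd
    have ht' : t = ∑ j, ∑ i, b j • (f j * e i) := aux_expand b f e hesum t htd
    have ht'' : t = ∑ i, ∑ j, b j • (e i * f j) := by
      rw [ht', Finset.sum_comm]
      exact Finset.sum_congr rfl fun i _ => Finset.sum_congr rfl fun j _ => by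
        rw [mul_comm]
    rw [hs', ht'', ← Finset.sum_add_distrib]
    refine Finset.sum_congr rfl fun i _ => ?_
    rw [← Finset.sum_add_distrib]
    exact Finset.sum_congr rfl fun j _ => (add_smul _ _ _).symm
  refine ⟨?_, hadd, ?_, ?_⟩
  · ext x
    simp only [Set.mem_inter_iff, Set.mem_setOf_eq, Set.mem_singleton_iff]
    constructor
    · rintro ⟨hx, hnx⟩
      obtain ⟨n, a, e, ha0, hide, horthe, hesum, hsd⟩ := aux_complete x hx
      obtain ⟨m, b, f, hb0, hidf, horthf, hfsum, htd⟩ := aux_complete (-x) hnx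
      have hx' : x = ∑ i, ∑ j, a i • (e i * f j) := aux_expand a e f hfsum x hsd
      have hnx' : -x = ∑ j, ∑ i, b j • (f j * e i) := aux_expand b f e hesum (-x) htd
      have hnx'' : -x = ∑ i, ∑ j, b j • (e i * f j) := by
        rw [hnx', Finset.sum_comm]
        exact Finset.sum_congr rfl fun i _ => Finset.sum_congr rfl fun j _ => by
          rw [mul_comm]
      have hzero : (∑ p : Fin n × Fin m, (a p.1 + b p.2) • (e p.1 * f p.2)) = 0 := by
        rw [Fintype.sum_prod_type]
        have heq : ∑ i, ∑ j, (a i + b j) • (e i * f j)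
            = (∑ i, ∑ j, a i • (e i * f j)) + ∑ i, ∑ j, b j • (e i * f j) := by
          rw [← Finset.sum_add_distrib]
          refine Finset.sum_congr rfl fun i _ => ?_
          rw [← Finset.sum_add_distrib]
          exact Finset.sum_congr rfl fun j _ => add_smul _ _ _
        rw [heq, ← hx', ← hnx'', add_neg_cancel]
      have hterm : ∀ p : Fin n × Fin m, a p.1 • (e p.1 * f p.2) = 0 := by
        intro p
        have h1 : (a p.1 + b p.2) • (e p.1 * f p.2) = 0 := by
          have h2 := aux_orth_mul_eq (fun p : Fin n × Fin m => a p.1 + b p.2)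
            (fun p => e p.1 * f p.2) (fun p => aux_prod_idem hide hidf p.1 p.2)
            (aux_prod_orth horthe horthf) p
          rw [hzero, zero_mul] at h2
          exact h2.symm
        rcases htf _ _ h1 with h | h
        · have ha : a p.1 = 0 := le_antisymm (by linarith [hb0 p.2, ha0 p.1]) (ha0 p.1)
          rw [ha, zero_smul]
        · rw [h, smul_zero]
      rw [hx']
      exact Finset.sum_eq_zero fun i _ => Finset.sum_eq_zero fun j _ => hterm (i, j)
    · rintro rfl
      exact ⟨⟨0, Fin.elim0, Fin.elim0, fun i => i.elim0, fun i => i.elim0,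
          fun i j => i.elim0, by simp⟩,
        ⟨0, Fin.elim0, Fin.elim0, fun i => i.elim0, fun i => i.elim0,
          fun i j => i.elim0, by simp⟩⟩
  · intro s t hs ht
    obtain ⟨n, a, e, ha0, hide, horthe, hesum, hsd⟩ := aux_complete s hs
    obtain ⟨m, b, f, hb0, hidf, horthf, hfsum, htd⟩ := aux_complete t ht
    refine aux_pack (fun i j => a i * b j) (fun i j => e i * f j) _
      (fun i j => mul_nonneg (ha0 i) (hb0 j)) (aux_prod_idem hide hidf)
      (aux_prod_orth horthe horthf) ?_
    rw [hsd, htd, Finset.sum_mul]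
    refine Finset.sum_congr rfl fun i _ => ?_
    rw [Finset.mul_sum]
    refine Finset.sum_congr rfl fun j _ => ?_
    rw [smul_mul_smul_comm]
  · intro c s hc hs
    obtain ⟨n, a, e, ha0, hid, horth, hsd⟩ := hs
    exact ⟨n, fun i => c * a i, e, fun i => mul_nonneg hc (ha0 i), hid, horth, by
      rw [hsd, Finset.smul_sum]
      exact Finset.sum_congr rfl fun i _ => (mul_smul c (a i) (e i)).symm⟩
end

section
/- Let D be a totally ordered integral domain and S a Specker D-algebra ordered by: s ≤ t iff t − s has an orthogonal decomposition with nonnegative coefficients. If s = Σ_i a_i e_i and t = Σ_i b_i e_i are orthogonal decompositions with the same pairwise orthogonal idempotents e_i, then the lattice join and meet of s and t exist in S and are given by s ∨ t = Σ_i max(a_i, b_i) e_i and s ∧ t = Σ_i min(a_i, b_i) e_i. -/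
open Finset

section AuxSt5
variable {D S : Type*} [CommRing D] [LinearOrder D] [IsStrictOrderedRing D] [CommRing S] [Algebra D S]

lemma aux_decomp_st5 {ι : Type*} [Fintype ι] (c : ι → D) (h : ι → S)
    (hc : ∀ i, 0 ≤ c i) (hid : ∀ i, IsIdempotentElem (h i))
    (horth : ∀ i j, i ≠ j → h i * h j = 0) {x : S} (hx : x = ∑ i, c i • h i) :
    OrthNonnegDecomp D S x := by
  let φ := (Fintype.equivFin ι).symm
  refine ⟨Fintype.card ι, c ∘ φ, h ∘ φ, fun i => hc _, fun i => hid _,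
    fun i j hij => horth _ _ (fun hEq => hij (φ.injective hEq)), ?_⟩
  rw [hx]
  exact (Equiv.sum_comp φ fun i => c i • h i).symm

lemma sum_smul_mul_sum_smul_st5 {n : ℕ} (e : Fin n → S)
    (hidem : ∀ i, IsIdempotentElem (e i)) (horth : ∀ i j, i ≠ j → e i * e j = 0)
    (A B : Finset (Fin n)) (c d : Fin n → D) :
    (∑ i ∈ A, c i • e i) * (∑ i ∈ B, d i • e i) = ∑ i ∈ A ∩ B, (c i * d i) • e i := by
  rw [Finset.sum_mul_sum]
  have hcongr : ∀ i ∈ A, (∑ j ∈ B, (c i • e i) * (d j • e j))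
      = if i ∈ B then (c i * d i) • e i else 0 := by
    intro i _
    split_ifs with hi
    · rw [Finset.sum_eq_single_of_mem i hi]
      · rw [smul_mul_smul_comm, show e i * e i = e i from hidem i]
      · intro j hj hji
        rw [smul_mul_smul_comm, horth i j (Ne.symm hji), smul_zero]
    · apply Finset.sum_eq_zero
      intro j hj
      rw [smul_mul_smul_comm, horth i j (fun hEq => hi (hEq ▸ hj)), smul_zero]
  rw [Finset.sum_congr rfl hcongr, Finset.sum_ite_mem]

lemma combine_decomp_st5 (E F G : S) (hE : IsIdempotentElem E) (hF : IsIdempotentElem F)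
    (hG : IsIdempotentElem G) (hEF : E * F = 0) (hEG : E * G = 0) (hFG : F * G = 0)
    {x y z : S} (hx : OrthNonnegDecomp D S x) (hy : OrthNonnegDecomp D S y)
    (hz : OrthNonnegDecomp D S z) :
    OrthNonnegDecomp D S (E * x + F * y + G * z) := by
  obtain ⟨n1, c1, f1, hc1, hf1, ho1, hx1⟩ := hx
  obtain ⟨n2, c2, f2, hc2, hf2, ho2, hx2⟩ := hy
  obtain ⟨n3, c3, f3, hc3, hf3, ho3, hx3⟩ := hz
  have hFE : F * E = 0 := by rw [mul_comm]; exact hEF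
  have hGE : G * E = 0 := by rw [mul_comm]; exact hEG
  have hGF : G * F = 0 := by rw [mul_comm]; exact hFG
  apply aux_decomp_st5 (ι := Fin n1 ⊕ Fin n2 ⊕ Fin n3)
    (Sum.elim c1 (Sum.elim c2 c3))
    (Sum.elim (fun i => E * f1 i) (Sum.elim (fun i => F * f2 i) (fun i => G * f3 i)))
  · rintro (i | i | i) <;> simp [hc1, hc2, hc3]
  · rintro (i | i | i) <;> simp only [Sum.elim_inl, Sum.elim_inr]
    · exact (mul_mul_mul_comm E (f1 i) E (f1 i)).trans
        (by rw [show E * E = E from hE, show f1 i * f1 i = f1 i from hf1 i])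
    · exact (mul_mul_mul_comm F (f2 i) F (f2 i)).trans
        (by rw [show F * F = F from hF, show f2 i * f2 i = f2 i from hf2 i])
    · exact (mul_mul_mul_comm G (f3 i) G (f3 i)).trans
        (by rw [show G * G = G from hG, show f3 i * f3 i = f3 i from hf3 i])
  · rintro (i | i | i) (j | j | j) hij <;> simp only [Sum.elim_inl, Sum.elim_inr] <;>
      rw [mul_mul_mul_comm]
    · rw [ho1 i j (by simpa using hij), mul_zero]
    · rw [hEF, zero_mul]
    · rw [hEG, zero_mul]
    · rw [hFE, zero_mul]
    · rw [ho2 i j (by simpa using hij), mul_zero]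
    · rw [hFG, zero_mul]
    · rw [hGE, zero_mul]
    · rw [hGF, zero_mul]
    · rw [ho3 i j (by simpa using hij), mul_zero]
  · rw [Fintype.sum_sum_type, Fintype.sum_sum_type]
    simp only [Sum.elim_inl, Sum.elim_inr]
    rw [hx1, hx2, hx3, Finset.mul_sum, Finset.mul_sum, Finset.mul_sum]
    simp [mul_smul_comm, add_assoc]

end AuxSt5

/-- joins and meets of elements with compatible orthogonal decompositions,
with respect to the order `s ≤ t ↔ t − s` has a nonnegative orthogonal decomposition. -/
theorem statement5 (D S : Type*) [CommRing D] [LinearOrder D] [IsStrictOrderedRing D] [CommRing S] [Algebra D S]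
    (hS : IsSpecker D S) {n : ℕ} (a b : Fin n → D) (e : Fin n → S)
    (hidem : ∀ i, IsIdempotentElem (e i)) (horth : ∀ i j, i ≠ j → e i * e j = 0)
    (s t : S) (hs : s = ∑ i, a i • e i) (ht : t = ∑ i, b i • e i) :
    relIsLUB (specLE D S) {s, t} (∑ i, max (a i) (b i) • e i) ∧
    relIsGLB (specLE D S) {s, t} (∑ i, min (a i) (b i) • e i) := by
  classical
  set P : Finset (Fin n) := Finset.univ.filter (fun i => b i ≤ a i) with hPdef
  set E : S := ∑ i ∈ P, e i with hEdef
  set F : S := ∑ i ∈ Pᶜ, e i with hFdef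
  set G : S := 1 - (E + F) with hGdef
  have key := sum_smul_mul_sum_smul_st5 (D := D) e hidem horth
  have hAB : ∀ A B : Finset (Fin n), (∑ i ∈ A, e i) * (∑ i ∈ B, e i) = ∑ i ∈ A ∩ B, e i := by
    intro A B
    have := key A B (fun _ => (1 : D)) (fun _ => (1 : D))
    simpa using this
  have hsum1 : ∀ (A : Finset (Fin n)) (c : Fin n → D),
      (∑ i ∈ A, e i) * (∑ i ∈ Finset.univ, c i • e i) = ∑ i ∈ A, c i • e i := by
    intro A c
    have := key A Finset.univ (fun _ => (1 : D)) c
    simpa using this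
  have hEidem : IsIdempotentElem E := by
    have := hAB P P; rw [Finset.inter_self] at this
    exact this
  have hFidem : IsIdempotentElem F := by
    have := hAB Pᶜ Pᶜ; rw [Finset.inter_self] at this
    exact this
  have hEF0 : E * F = 0 := by
    have := hAB P Pᶜ
    simpa using this
  have hEpF : E + F = ∑ i, e i := Finset.sum_add_sum_compl P e
  have hTidem : IsIdempotentElem (E + F) := by
    rw [hEpF]
    have := hAB Finset.univ Finset.univ; rw [Finset.inter_self] at this
    exact this
  have hGidem : IsIdempotentElem G := hTidem.one_sub
  have hEG0 : E * G = 0 := by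
    have h1 : E * G = E - E * E - E * F := by rw [hGdef]; ring
    rw [h1, show E * E = E from hEidem, hEF0]; ring
  have hFG0 : F * G = 0 := by
    have h1 : F * G = F - F * F - E * F := by rw [hGdef]; ring
    rw [h1, show F * F = F from hFidem, hEF0]; ring
  have hEs : E * s = ∑ i ∈ P, a i • e i := by rw [hs]; exact hsum1 P a
  have hFs : F * s = ∑ i ∈ Pᶜ, a i • e i := by rw [hs]; exact hsum1 Pᶜ a
  have hEt : E * t = ∑ i ∈ P, b i • e i := by rw [ht]; exact hsum1 P b
  have hFt : F * t = ∑ i ∈ Pᶜ, b i • e i := by rw [ht]; exact hsum1 Pᶜ b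
  have hsfull : E * s + F * s = s := by
    rw [hEs, hFs, Finset.sum_add_sum_compl, hs]
  have hmemP : ∀ i ∈ P, b i ≤ a i := by
    intro i hi; simpa [hPdef] using hi
  have hmemPc : ∀ i ∈ Pᶜ, a i ≤ b i := by
    intro i hi
    have : ¬ b i ≤ a i := by simpa [hPdef] using hi
    exact le_of_lt (lt_of_not_ge this)
  have hu : (∑ i, max (a i) (b i) • e i) = E * s + F * t := by
    rw [hEs, hFt, ← Finset.sum_add_sum_compl P (fun i => max (a i) (b i) • e i)]
    congr 1
    · exact Finset.sum_congr rfl fun i hi => by rw [max_eq_left (hmemP i hi)]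
    · exact Finset.sum_congr rfl fun i hi => by rw [max_eq_right (hmemPc i hi)]
  have hw : (∑ i, min (a i) (b i) • e i) = E * t + F * s := by
    rw [hEt, hFs, ← Finset.sum_add_sum_compl P (fun i => min (a i) (b i) • e i)]
    congr 1
    · exact Finset.sum_congr rfl fun i hi => by rw [min_eq_right (hmemP i hi)]
    · exact Finset.sum_congr rfl fun i hi => by rw [min_eq_left (hmemPc i hi)]
  constructor
  · constructor
    · intro x hx
      rcases hx with rfl | rfl
      · -- specLE x u, x = s
        refine aux_decomp_st5 (fun i => max (a i) (b i) - a i) e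
          (fun i => sub_nonneg.mpr (le_max_left _ _)) hidem horth ?_
        rw [hs, ← Finset.sum_sub_distrib]
        exact Finset.sum_congr rfl fun i _ => by rw [sub_smul]
      · refine aux_decomp_st5 (fun i => max (a i) (b i) - b i) e
          (fun i => sub_nonneg.mpr (le_max_right _ _)) hidem horth ?_
        rw [ht, ← Finset.sum_sub_distrib]
        exact Finset.sum_congr rfl fun i _ => by rw [sub_smul]
    · intro v hv
      have h1 : OrthNonnegDecomp D S (v - s) := hv s (by simp)
      have h2 : OrthNonnegDecomp D S (v - t) := hv t (by simp)
      show OrthNonnegDecomp D S (v - ∑ i, max (a i) (b i) • e i)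
      rw [hu]
      have heq : v - (E * s + F * t) = E * (v - s) + F * (v - t) + G * (v - s) := by
        rw [hGdef]; linear_combination -hsfull
      rw [heq]
      exact combine_decomp_st5 E F G hEidem hFidem hGidem hEF0 hEG0 hFG0 h1 h2 h1
  · constructor
    · intro x hx
      rcases hx with rfl | rfl
      · refine aux_decomp_st5 (fun i => a i - min (a i) (b i)) e
          (fun i => sub_nonneg.mpr (min_le_left _ _)) hidem horth ?_
        rw [hs, ← Finset.sum_sub_distrib]
        exact Finset.sum_congr rfl fun i _ => by rw [sub_smul]
      · refine aux_decomp_st5 (fun i => b i - min (a i) (b i)) e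
          (fun i => sub_nonneg.mpr (min_le_right _ _)) hidem horth ?_
        rw [ht, ← Finset.sum_sub_distrib]
        exact Finset.sum_congr rfl fun i _ => by rw [sub_smul]
    · intro v hv
      have h1 : OrthNonnegDecomp D S (s - v) := hv s (by simp)
      have h2 : OrthNonnegDecomp D S (t - v) := hv t (by simp)
      show OrthNonnegDecomp D S ((∑ i, min (a i) (b i) • e i) - v)
      rw [hw]
      have heq : (E * t + F * s) - v = E * (t - v) + F * (s - v) + G * (s - v) := by
        rw [hGdef]; linear_combination hsfull
      rw [heq]
      exact combine_decomp_st5 E F G hEidem hFidem hGidem hEF0 hEG0 hFG0 h2 h1 h1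
end

section
/- Let D be a totally ordered integral domain and S a Specker D-algebra. There exists a unique partial ordering ≤ on S making S into an f-algebra over D, namely s ≤ t iff t − s has an orthogonal decomposition with nonnegative coefficients; moreover this ordering restricts to the usual boolean ordering on Id(S). -/
open Finset

/-- `(S, ≤)` is an f-algebra over `D` (lattice + ℓ-algebra + f-ring conditions). -/
def IsFAlgebraOrder (D S : Type*) [CommRing D] [LinearOrder D] [IsStrictOrderedRing D] [CommRing S] [Algebra D S]
    (iP : PartialOrder S) : Prop := by
  letI := iP
  exact (∀ s t : S, ∃ x, IsLUB {s, t} x) ∧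
    (∀ s t : S, ∃ x, IsGLB {s, t} x) ∧
    (∀ s t r : S, s ≤ t → s + r ≤ t + r) ∧
    (∀ s t : S, 0 ≤ s → 0 ≤ t → 0 ≤ s * t) ∧
    (∀ (a : D) (s : S), 0 ≤ a → 0 ≤ s → 0 ≤ a • s) ∧
    (∀ r s t : S, IsGLB {s, t} (0 : S) → 0 ≤ r → IsGLB {r * s, t} (0 : S))

/-- The order is given by nonnegative orthogonal decompositions of differences. -/
def OrderEqDecomp (D S : Type*) [CommRing D] [LinearOrder D] [IsStrictOrderedRing D] [CommRing S] [Algebra D S]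
    (iP : PartialOrder S) : Prop := by
  letI := iP
  exact ∀ s t : S, s ≤ t ↔ OrthNonnegDecomp D S (t - s)

/-- The order restricts to the usual boolean order on idempotents. -/
def OrderIdemUsual (S : Type*) [CommRing S] (iP : PartialOrder S) : Prop := by
  letI := iP
  exact ∀ e f : S, IsIdempotentElem e → IsIdempotentElem f → (e ≤ f ↔ e * f = e)

section SpeckerHelpers

variable {D S : Type*} [CommRing D] [LinearOrder D] [IsStrictOrderedRing D] [CommRing S] [Algebra D S]

/-- An orthogonal family of idempotents. -/
def SpOrth {ι : Type*} (e : ι → S) : Prop :=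
  (∀ i, IsIdempotentElem (e i)) ∧ (∀ i j, i ≠ j → e i * e j = 0)

lemma spOrth_prod {ι κ : Type*} {e : ι → S} {f : κ → S} (he : SpOrth e) (hf : SpOrth f) :
    SpOrth (fun p : ι × κ => e p.1 * f p.2) := by
  constructor
  · intro p
    show e p.1 * f p.2 * (e p.1 * f p.2) = e p.1 * f p.2
    calc e p.1 * f p.2 * (e p.1 * f p.2) = (e p.1 * e p.1) * (f p.2 * f p.2) := by ring
    _ = e p.1 * f p.2 := by rw [he.1 p.1, hf.1 p.2]
  · intro p q hpq
    by_cases h1 : p.1 = q.1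
    · have h2 : p.2 ≠ q.2 := fun h2 => hpq (Prod.ext h1 h2)
      calc e p.1 * f p.2 * (e q.1 * f q.2) = (e p.1 * e q.1) * (f p.2 * f q.2) := by ring
      _ = 0 := by rw [hf.2 p.2 q.2 h2, mul_zero]
    · calc e p.1 * f p.2 * (e q.1 * f q.2) = (e p.1 * e q.1) * (f p.2 * f q.2) := by ring
      _ = 0 := by rw [he.2 p.1 q.1 h1, zero_mul]

lemma spOrth_mul_sum {ι : Type*} [Fintype ι] {e : ι → S} (he : SpOrth e) (a : ι → D) (k : ι) :
    (∑ i, a i • e i) * e k = a k • e k := by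
  rw [Finset.sum_mul, Finset.sum_eq_single k]
  · rw [smul_mul_assoc, he.1 k]
  · intro i _ hik
    rw [smul_mul_assoc, he.2 i k hik, smul_zero]
  · intro h
    exact absurd (Finset.mem_univ k) h

lemma spOrth_mul_mul {ι : Type*} [Fintype ι] {e : ι → S} (he : SpOrth e) (a b : ι → D) :
    (∑ i, a i • e i) * (∑ i, b i • e i) = ∑ i, (a i * b i) • e i := by
  rw [Finset.sum_mul]
  refine Finset.sum_congr rfl fun i _ => ?_
  rw [smul_mul_assoc, mul_comm (e i), spOrth_mul_sum he b i, smul_comm, smul_smul, mul_comm (b i)]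

lemma sp_refine_fst {ι κ : Type*} [Fintype ι] [Fintype κ] (c : ι → D) (e : ι → S) {f : κ → S}
    (hf : ∑ j, f j = 1) :
    ∑ i, c i • e i = ∑ p : ι × κ, c p.1 • (e p.1 * f p.2) := by
  calc ∑ i, c i • e i = ∑ i, c i • (e i * ∑ j, f j) := by rw [hf]; simp [mul_one]
  _ = ∑ p : ι × κ, c p.1 • (e p.1 * f p.2) := by
      rw [Fintype.sum_prod_type]
      refine Finset.sum_congr rfl fun i _ => ?_
      rw [Finset.mul_sum, Finset.smul_sum]

lemma sp_refine_snd {ι κ : Type*} [Fintype ι] [Fintype κ] (c : κ → D) {e : ι → S} (f : κ → S)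
    (he : ∑ i, e i = 1) :
    ∑ j, c j • f j = ∑ p : ι × κ, c p.2 • (e p.1 * f p.2) := by
  calc ∑ j, c j • f j = ∑ j, c j • ((∑ i, e i) * f j) := by rw [he]; simp [one_mul]
  _ = ∑ p : ι × κ, c p.2 • (e p.1 * f p.2) := by
      rw [Fintype.sum_prod_type_right]
      refine Finset.sum_congr rfl fun j _ => ?_
      rw [Finset.sum_mul, Finset.smul_sum]

lemma sp_prod_sum_one {ι κ : Type*} [Fintype ι] [Fintype κ] {e : ι → S} {f : κ → S}
    (he : ∑ i, e i = 1) (hf : ∑ j, f j = 1) :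
    ∑ p : ι × κ, e p.1 * f p.2 = 1 := by
  rw [Fintype.sum_prod_type]
  calc ∑ i, ∑ j, e i * f j = ∑ i, e i * ∑ j, f j := by
        refine Finset.sum_congr rfl fun i _ => ?_
        rw [Finset.mul_sum]
  _ = 1 := by rw [hf]; simp [mul_one, he]

/-- A full decomposition over a general finite index type. -/
def SpGD {ι : Type*} [Fintype ι] (a : ι → D) (e : ι → S) (s : S) : Prop :=
  SpOrth e ∧ ∑ i, e i = 1 ∧ s = ∑ i, a i • e i

lemma spGD_fin {ι : Type*} [Fintype ι] {a : ι → D} {e : ι → S} {s : S} (h : SpGD a e s) :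
    ∃ (n : ℕ) (a' : Fin n → D) (e' : Fin n → S), SpGD a' e' s := by
  let g := (Fintype.equivFin ι).symm
  refine ⟨Fintype.card ι, a ∘ g, e ∘ g,
    ⟨fun i => h.1.1 _, fun i j hij => h.1.2 _ _ (fun hg => hij (g.injective hg))⟩, ?_, ?_⟩
  · rw [← h.2.1]
    exact Fintype.sum_equiv g _ _ fun x => rfl
  · rw [h.2.2]
    exact (Fintype.sum_equiv g _ _ fun x => rfl).symm

lemma orthNonneg_of_fam {ι : Type*} [Fintype ι] {a : ι → D} {e : ι → S} {s : S}
    (he : SpOrth e) (hs : s = ∑ i, a i • e i) (ha : ∀ i, 0 ≤ a i) :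
    OrthNonnegDecomp D S s := by
  let g := (Fintype.equivFin ι).symm
  exact ⟨Fintype.card ι, a ∘ g, e ∘ g, fun i => ha _, fun i => he.1 _,
    fun i j hij => he.2 _ _ (fun h => hij (g.injective h)),
    by rw [hs]; exact (Fintype.sum_equiv g _ _ fun x => rfl).symm⟩

lemma spGD_exists (hS : IsSpecker D S) (s : S) :
    ∃ (n : ℕ) (a : Fin n → D) (e : Fin n → S), SpGD a e s := by
  have hmem : s ∈ Algebra.adjoin D {e : S | IsIdempotentElem e} := by
    have h2 : Algebra.adjoin D {e : S | IsIdempotentElem e} = ⊤ := hS.2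
    rw [h2]
    exact Algebra.mem_top
  induction hmem using Algebra.adjoin_induction with
  | mem x hx =>
      have hx' : IsIdempotentElem x := hx
      refine spGD_fin (ι := Fin 2) (a := ![1, 0]) (e := ![x, 1 - x]) ⟨⟨?_, ?_⟩, ?_, ?_⟩
      · intro i
        fin_cases i
        · simpa using hx'
        · simpa using hx'.one_sub
      · intro i j hij
        fin_cases i <;> fin_cases j <;> simp_all
      · simp [Fin.sum_univ_two]
      · simp [Fin.sum_univ_two]
  | algebraMap r =>
      refine spGD_fin (ι := Fin 1) (a := ![r]) (e := ![1]) ⟨⟨?_, ?_⟩, ?_, ?_⟩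
      · intro i
        fin_cases i
        simpa using IsIdempotentElem.one
      · intro i j hij
        exact absurd (Subsingleton.elim i j) hij
      · simp
      · simp [Algebra.algebraMap_eq_smul_one]
  | add x y hx hy ihx ihy =>
      obtain ⟨n, a, e, he, hesum, hxe⟩ := ihx
      obtain ⟨m, b, f, hf, hfsum, hyf⟩ := ihy
      refine spGD_fin (ι := Fin n × Fin m) (a := fun p => a p.1 + b p.2)
        (e := fun p => e p.1 * f p.2) ⟨spOrth_prod he hf, sp_prod_sum_one hesum hfsum, ?_⟩
      rw [hxe, sp_refine_fst a e hfsum, hyf, sp_refine_snd b f hesum,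
        ← Finset.sum_add_distrib]
      exact Finset.sum_congr rfl fun p _ => (add_smul _ _ _).symm
  | mul x y hx hy ihx ihy =>
      obtain ⟨n, a, e, he, hesum, hxe⟩ := ihx
      obtain ⟨m, b, f, hf, hfsum, hyf⟩ := ihy
      refine spGD_fin (ι := Fin n × Fin m) (a := fun p => a p.1 * b p.2)
        (e := fun p => e p.1 * f p.2) ⟨spOrth_prod he hf, sp_prod_sum_one hesum hfsum, ?_⟩
      rw [hxe, sp_refine_fst a e hfsum, hyf, sp_refine_snd b f hesum,
        spOrth_mul_mul (spOrth_prod he hf)]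

lemma spGD_of_orthNonneg {s : S} (h : OrthNonnegDecomp D S s) :
    ∃ (ι : Type) (_ : Fintype ι) (a : ι → D) (e : ι → S), SpGD a e s ∧ ∀ i, 0 ≤ a i := by
  obtain ⟨n, a, e, ha, hidem, horth, hs⟩ := h
  have hEk : ∀ k, e k * (∑ i, e i) = e k := by
    intro k
    rw [Finset.mul_sum, Finset.sum_eq_single k]
    · exact hidem k
    · intro i _ hik
      exact horth k i fun h => hik h.symm
    · intro h
      exact absurd (Finset.mem_univ k) h
  have hEE : IsIdempotentElem (∑ i, e i) := by
    show (∑ i, e i) * (∑ i, e i) = ∑ i, e i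
    rw [Finset.sum_mul]
    exact Finset.sum_congr rfl fun k _ => hEk k
  refine ⟨Option (Fin n), inferInstance,
    fun o => match o with | none => 0 | some i => a i,
    fun o => match o with | none => 1 - ∑ i, e i | some i => e i, ⟨⟨?_, ?_⟩, ?_, ?_⟩, ?_⟩
  · intro o
    match o with
    | none => exact hEE.one_sub
    | some i => exact hidem i
  · intro o o' hoo'
    match o, o' with
    | none, none => exact absurd rfl hoo'
    | some i, none =>
        show e i * (1 - ∑ j, e j) = 0
        rw [mul_one_sub, hEk i, sub_self]
    | none, some j =>
        show (1 - ∑ i, e i) * e j = 0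
        rw [one_sub_mul, mul_comm, hEk j, sub_self]
    | some i, some j =>
        exact horth i j fun h => hoo' (by rw [h])
  · rw [Fintype.sum_option]
    ring
  · rw [Fintype.sum_option, hs]
    simp
  · intro o
    match o with
    | none => exact le_refl 0
    | some i => exact ha i

lemma sp_P_zero : OrthNonnegDecomp D S 0 :=
  ⟨0, Fin.elim0, Fin.elim0, fun i => i.elim0, fun i => i.elim0, fun i => i.elim0, by simp⟩

lemma sp_P_add {s t : S} (hs : OrthNonnegDecomp D S s) (ht : OrthNonnegDecomp D S t) :
    OrthNonnegDecomp D S (s + t) := by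
  obtain ⟨ι, _, a, e, ⟨he, hesum, hse⟩, ha⟩ := spGD_of_orthNonneg hs
  obtain ⟨κ, _, b, f, ⟨hf, hfsum, htf⟩, hb⟩ := spGD_of_orthNonneg ht
  refine orthNonneg_of_fam (a := fun p : ι × κ => a p.1 + b p.2) (spOrth_prod he hf) ?_
    (fun p => add_nonneg (ha p.1) (hb p.2))
  rw [hse, sp_refine_fst a e hfsum, htf, sp_refine_snd b f hesum, ← Finset.sum_add_distrib]
  exact Finset.sum_congr rfl fun p _ => (add_smul _ _ _).symm

lemma sp_P_mul {s t : S} (hs : OrthNonnegDecomp D S s) (ht : OrthNonnegDecomp D S t) :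
    OrthNonnegDecomp D S (s * t) := by
  obtain ⟨ι, _, a, e, ⟨he, hesum, hse⟩, ha⟩ := spGD_of_orthNonneg hs
  obtain ⟨κ, _, b, f, ⟨hf, hfsum, htf⟩, hb⟩ := spGD_of_orthNonneg ht
  refine orthNonneg_of_fam (a := fun p : ι × κ => a p.1 * b p.2) (spOrth_prod he hf) ?_
    (fun p => mul_nonneg (ha p.1) (hb p.2))
  rw [hse, sp_refine_fst a e hfsum, htf, sp_refine_snd b f hesum,
    spOrth_mul_mul (spOrth_prod he hf)]

lemma sp_P_smul {c : D} (hc : 0 ≤ c) {s : S} (h : OrthNonnegDecomp D S s) :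
    OrthNonnegDecomp D S (c • s) := by
  obtain ⟨n, a, e, ha, hidem, horth, hs⟩ := h
  exact ⟨n, fun i => c * a i, e, fun i => mul_nonneg hc (ha i), hidem, horth, by
    rw [hs, Finset.smul_sum]
    exact Finset.sum_congr rfl fun i _ => smul_smul _ _ _⟩

lemma sp_P_antisymm (hS : IsSpecker D S) {s : S} (h1 : OrthNonnegDecomp D S s)
    (h2 : OrthNonnegDecomp D S (-s)) : s = 0 := by
  obtain ⟨ι, _, a, e, ⟨he, hesum, hse⟩, ha⟩ := spGD_of_orthNonneg h1
  obtain ⟨κ, _, b, f, ⟨hf, hfsum, htf⟩, hb⟩ := spGD_of_orthNonneg h2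
  have hgo : SpOrth (fun p : ι × κ => e p.1 * f p.2) := spOrth_prod he hf
  have h0 : (0 : S) = ∑ p : ι × κ, (a p.1 + b p.2) • (e p.1 * f p.2) := by
    have hadd : s + (-s) = 0 := add_neg_cancel s
    rw [← hadd, htf, sp_refine_snd b f hesum, hse, sp_refine_fst a e hfsum,
      ← Finset.sum_add_distrib]
    exact Finset.sum_congr rfl fun p _ => (add_smul _ _ _).symm
  have hkey : ∀ p : ι × κ, e p.1 * f p.2 = 0 ∨ a p.1 + b p.2 = 0 := by
    intro p
    have hmul := spOrth_mul_sum hgo (fun q => a q.1 + b q.2) p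
    rw [← h0, zero_mul] at hmul
    rcases hS.1 _ _ hmul.symm with h | h
    · right; exact h
    · left; exact h
  rw [hse, sp_refine_fst a e hfsum]
  refine Finset.sum_eq_zero fun p _ => ?_
  rcases hkey p with h | h
  · rw [h, smul_zero]
  · have hz : a p.1 = 0 := le_antisymm (by linarith [hb p.2]) (ha p.1)
    rw [hz, zero_smul]

lemma sp_P_idem {e : S} (he : IsIdempotentElem e) : OrthNonnegDecomp D S e :=
  ⟨1, fun _ => 1, fun _ => e, fun _ => zero_le_one, fun _ => he,
    fun i j hij => absurd (Subsingleton.elim i j) hij, by simp⟩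

lemma sp_P_sign (hS : IsSpecker D S) {ι : Type*} [Fintype ι] {d : ι → D} {e : ι → S}
    (he : SpOrth e) {s : S} (hs : s = ∑ i, d i • e i) (hP : OrthNonnegDecomp D S s) :
    ∀ k, d k < 0 → e k = 0 := by
  intro k hk
  have h1 : OrthNonnegDecomp D S (d k • e k) := by
    rw [← spOrth_mul_sum he d k, ← hs]
    exact sp_P_mul hP (sp_P_idem (he.1 k))
  have h2 : OrthNonnegDecomp D S (-(d k • e k)) := by
    rw [← neg_smul]
    exact sp_P_smul (by linarith) (sp_P_idem (he.1 k))
  have h3 := sp_P_antisymm hS h1 h2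
  rcases hS.1 _ _ h3 with h | h
  · exact absurd h (ne_of_lt hk)
  · exact h

lemma sp_P_of_vanish {ι : Type*} [Fintype ι] {d : ι → D} {e : ι → S} (he : SpOrth e)
    {s : S} (hs : s = ∑ i, d i • e i) (hv : ∀ k, d k < 0 → e k = 0) :
    OrthNonnegDecomp D S s := by
  refine orthNonneg_of_fam (a := fun i => max (d i) 0) he ?_ (fun i => le_max_right _ _)
  rw [hs]
  refine Finset.sum_congr rfl fun i _ => ?_
  show d i • e i = max (d i) 0 • e i
  rcases le_or_gt 0 (d i) with h | h
  · rw [max_eq_left h]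
  · rw [hv i h, smul_zero, smul_zero]

lemma sp_reduced (hS : IsSpecker D S) {s : S} (h : s * s = 0) : s = 0 := by
  obtain ⟨n, a, e, he, hesum, hs⟩ := spGD_exists hS s
  have h2 : (0 : S) = ∑ i, (a i * a i) • e i := by
    rw [← h, hs, spOrth_mul_mul he]
  rw [hs]
  refine Finset.sum_eq_zero fun k _ => ?_
  have h3 := spOrth_mul_sum he (fun i => a i * a i) k
  rw [← h2, zero_mul] at h3
  rcases hS.1 _ _ h3.symm with h4 | h4
  · rw [mul_self_eq_zero.mp h4, zero_smul]
  · rw [h4, smul_zero]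

/-- The partial order on a Specker algebra given by `specLE`. -/
def spOrder (hS : IsSpecker D S) : PartialOrder S where
  le := specLE D S
  le_refl s := by
    show OrthNonnegDecomp D S (s - s)
    rw [sub_self]
    exact sp_P_zero
  le_trans s t u h1 h2 := by
    show OrthNonnegDecomp D S (u - s)
    rw [← sub_add_sub_cancel u t s]
    exact sp_P_add h2 h1
  le_antisymm s t h1 h2 := by
    have h3 : t - s = 0 := by
      refine sp_P_antisymm hS h1 ?_
      have he : -(t - s) = s - t := by ring
      rw [he]
      exact h2
    have := sub_eq_zero.mp h3
    exact this.symm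

lemma sp_isLUB_pair_iff {α : Type*} [LE α] {s t x : α} :
    IsLUB {s, t} x ↔ (s ≤ x ∧ t ≤ x) ∧ ∀ v, s ≤ v → t ≤ v → x ≤ v := by
  constructor
  · intro h
    refine ⟨⟨h.1 (by simp), h.1 (by simp)⟩, fun v hv1 hv2 => h.2 ?_⟩
    intro y hy
    simp only [Set.mem_insert_iff, Set.mem_singleton_iff] at hy
    rcases hy with rfl | rfl
    exacts [hv1, hv2]
  · intro h
    constructor
    · intro y hy
      simp only [Set.mem_insert_iff, Set.mem_singleton_iff] at hy
      rcases hy with rfl | rfl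
      exacts [h.1.1, h.1.2]
    · intro v hv
      exact h.2 v (hv (by simp)) (hv (by simp))

lemma sp_isGLB_pair_iff {α : Type*} [LE α] {s t x : α} :
    IsGLB {s, t} x ↔ (x ≤ s ∧ x ≤ t) ∧ ∀ v, v ≤ s → v ≤ t → v ≤ x := by
  constructor
  · intro h
    refine ⟨⟨h.1 (by simp), h.1 (by simp)⟩, fun v hv1 hv2 => h.2 ?_⟩
    intro y hy
    simp only [Set.mem_insert_iff, Set.mem_singleton_iff] at hy
    rcases hy with rfl | rfl
    exacts [hv1, hv2]
  · intro h
    constructor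
    · intro y hy
      simp only [Set.mem_insert_iff, Set.mem_singleton_iff] at hy
      rcases hy with rfl | rfl
      exacts [h.1.1, h.1.2]
    · intro v hv
      exact h.2 v (hv (by simp)) (hv (by simp))

lemma sp_sum_smul_sub {ι : Type*} [Fintype ι] (c d : ι → D) (e : ι → S) :
    (∑ i, c i • e i) - ∑ i, d i • e i = ∑ i, (c i - d i) • e i := by
  rw [← Finset.sum_sub_distrib]
  exact Finset.sum_congr rfl fun i _ => (sub_smul _ _ _).symm

lemma spec_isLUB (hS : IsSpecker D S) {ι : Type*} [Fintype ι] (a b : ι → D) (e : ι → S)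
    (he : SpOrth e) (hesum : ∑ i, e i = 1) {s t : S}
    (hs : s = ∑ i, a i • e i) (ht : t = ∑ i, b i • e i) :
    @IsLUB S (spOrder hS).toPreorder.toLE {s, t} (∑ i, max (a i) (b i) • e i) := by
  letI := spOrder hS
  rw [sp_isLUB_pair_iff]
  refine ⟨⟨?_, ?_⟩, ?_⟩
  · show OrthNonnegDecomp D S ((∑ i, max (a i) (b i) • e i) - s)
    rw [hs, sp_sum_smul_sub]
    exact orthNonneg_of_fam he rfl fun i => sub_nonneg.mpr (le_max_left _ _)
  · show OrthNonnegDecomp D S ((∑ i, max (a i) (b i) • e i) - t)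
    rw [ht, sp_sum_smul_sub]
    exact orthNonneg_of_fam he rfl fun i => sub_nonneg.mpr (le_max_right _ _)
  · intro v hv1 hv2
    obtain ⟨m, c, f, hf, hfsum, hv⟩ := spGD_exists hS v
    have hg : SpOrth (fun p : ι × Fin m => e p.1 * f p.2) := spOrth_prod he hf
    have hvg : v = ∑ p : ι × Fin m, c p.2 • (e p.1 * f p.2) := by
      rw [hv]; exact sp_refine_snd c f hesum
    have hsg : s = ∑ p : ι × Fin m, a p.1 • (e p.1 * f p.2) := by
      rw [hs]; exact sp_refine_fst a e hfsum
    have htg : t = ∑ p : ι × Fin m, b p.1 • (e p.1 * f p.2) := by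
      rw [ht]; exact sp_refine_fst b e hfsum
    have hvs : v - s = ∑ p : ι × Fin m, (c p.2 - a p.1) • (e p.1 * f p.2) := by
      rw [hvg, hsg]
      exact sp_sum_smul_sub _ _ _
    have hvt : v - t = ∑ p : ι × Fin m, (c p.2 - b p.1) • (e p.1 * f p.2) := by
      rw [hvg, htg]
      exact sp_sum_smul_sub _ _ _
    have sA : ∀ p : ι × Fin m, c p.2 - a p.1 < 0 → e p.1 * f p.2 = 0 :=
      sp_P_sign hS hg hvs hv1
    have sB : ∀ p : ι × Fin m, c p.2 - b p.1 < 0 → e p.1 * f p.2 = 0 :=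
      sp_P_sign hS hg hvt hv2
    show OrthNonnegDecomp D S (v - ∑ i, max (a i) (b i) • e i)
    have hx : v - (∑ i, max (a i) (b i) • e i) =
        ∑ p : ι × Fin m, (c p.2 - max (a p.1) (b p.1)) • (e p.1 * f p.2) := by
      rw [hvg, sp_refine_fst (fun i => max (a i) (b i)) e hfsum]
      exact sp_sum_smul_sub _ _ _
    rw [hx]
    refine sp_P_of_vanish hg rfl ?_
    intro p hp
    rcases lt_max_iff.mp (by linarith : c p.2 < max (a p.1) (b p.1)) with h | h
    · exact sA p (by linarith)
    · exact sB p (by linarith)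

lemma spec_isGLB (hS : IsSpecker D S) {ι : Type*} [Fintype ι] (a b : ι → D) (e : ι → S)
    (he : SpOrth e) (hesum : ∑ i, e i = 1) {s t : S}
    (hs : s = ∑ i, a i • e i) (ht : t = ∑ i, b i • e i) :
    @IsGLB S (spOrder hS).toPreorder.toLE {s, t} (∑ i, min (a i) (b i) • e i) := by
  letI := spOrder hS
  rw [sp_isGLB_pair_iff]
  refine ⟨⟨?_, ?_⟩, ?_⟩
  · show OrthNonnegDecomp D S (s - ∑ i, min (a i) (b i) • e i)
    rw [hs, sp_sum_smul_sub]
    exact orthNonneg_of_fam he rfl fun i => sub_nonneg.mpr (min_le_left _ _)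
  · show OrthNonnegDecomp D S (t - ∑ i, min (a i) (b i) • e i)
    rw [ht, sp_sum_smul_sub]
    exact orthNonneg_of_fam he rfl fun i => sub_nonneg.mpr (min_le_right _ _)
  · intro v hv1 hv2
    obtain ⟨m, c, f, hf, hfsum, hv⟩ := spGD_exists hS v
    have hg : SpOrth (fun p : ι × Fin m => e p.1 * f p.2) := spOrth_prod he hf
    have hvg : v = ∑ p : ι × Fin m, c p.2 • (e p.1 * f p.2) := by
      rw [hv]; exact sp_refine_snd c f hesum
    have hsg : s = ∑ p : ι × Fin m, a p.1 • (e p.1 * f p.2) := by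
      rw [hs]; exact sp_refine_fst a e hfsum
    have htg : t = ∑ p : ι × Fin m, b p.1 • (e p.1 * f p.2) := by
      rw [ht]; exact sp_refine_fst b e hfsum
    have hvs : s - v = ∑ p : ι × Fin m, (a p.1 - c p.2) • (e p.1 * f p.2) := by
      rw [hvg, hsg]
      exact sp_sum_smul_sub _ _ _
    have hvt : t - v = ∑ p : ι × Fin m, (b p.1 - c p.2) • (e p.1 * f p.2) := by
      rw [hvg, htg]
      exact sp_sum_smul_sub _ _ _
    have sA : ∀ p : ι × Fin m, a p.1 - c p.2 < 0 → e p.1 * f p.2 = 0 :=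
      sp_P_sign hS hg hvs hv1
    have sB : ∀ p : ι × Fin m, b p.1 - c p.2 < 0 → e p.1 * f p.2 = 0 :=
      sp_P_sign hS hg hvt hv2
    show OrthNonnegDecomp D S ((∑ i, min (a i) (b i) • e i) - v)
    have hx : (∑ i, min (a i) (b i) • e i) - v =
        ∑ p : ι × Fin m, (min (a p.1) (b p.1) - c p.2) • (e p.1 * f p.2) := by
      rw [hvg, sp_refine_fst (fun i => min (a i) (b i)) e hfsum]
      exact sp_sum_smul_sub _ _ _
    rw [hx]
    refine sp_P_of_vanish hg rfl ?_
    intro p hp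
    rcases min_lt_iff.mp (by linarith : min (a p.1) (b p.1) < c p.2) with h | h
    · exact sA p (by linarith)
    · exact sB p (by linarith)

end SpeckerHelpers

set_option maxHeartbeats 1000000 in
/-- a Specker `D`-algebra carries a unique partial order making it an
f-algebra over `D`; it is given by nonnegative orthogonal decompositions and restricts
to the usual order on idempotents. -/
theorem statement6 (D S : Type*) [CommRing D] [LinearOrder D] [IsStrictOrderedRing D] [CommRing S] [Algebra D S]
    (hS : IsSpecker D S) :
    ∃ iP : PartialOrder S, IsFAlgebraOrder D S iP ∧ OrderEqDecomp D S iP ∧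
      OrderIdemUsual S iP ∧ ∀ iP' : PartialOrder S, IsFAlgebraOrder D S iP' → iP' = iP := by
  refine ⟨spOrder hS, ?_, ?_, ?_, ?_⟩
  · -- f-algebra order
    unfold IsFAlgebraOrder
    letI := spOrder hS
    refine ⟨?_, ?_, ?_, ?_, ?_, ?_⟩
    · -- binary sups
      intro s t
      obtain ⟨n, a, e, he, hesum, hse⟩ := spGD_exists hS s
      obtain ⟨m, b, f, hf, hfsum, htf⟩ := spGD_exists hS t
      have hsg : s = ∑ p : Fin n × Fin m, a p.1 • (e p.1 * f p.2) := by
        rw [hse]; exact sp_refine_fst a e hfsum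
      have htg : t = ∑ p : Fin n × Fin m, b p.2 • (e p.1 * f p.2) := by
        rw [htf]; exact sp_refine_snd b f hesum
      refine ⟨∑ p : Fin n × Fin m, max (a p.1) (b p.2) • (e p.1 * f p.2), ?_⟩
      exact spec_isLUB hS (fun p : Fin n × Fin m => a p.1) (fun p : Fin n × Fin m => b p.2) (fun p : Fin n × Fin m => e p.1 * f p.2)
        (spOrth_prod he hf) (sp_prod_sum_one hesum hfsum) hsg htg
    · -- binary infs
      intro s t
      obtain ⟨n, a, e, he, hesum, hse⟩ := spGD_exists hS s
      obtain ⟨m, b, f, hf, hfsum, htf⟩ := spGD_exists hS t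
      have hsg : s = ∑ p : Fin n × Fin m, a p.1 • (e p.1 * f p.2) := by
        rw [hse]; exact sp_refine_fst a e hfsum
      have htg : t = ∑ p : Fin n × Fin m, b p.2 • (e p.1 * f p.2) := by
        rw [htf]; exact sp_refine_snd b f hesum
      refine ⟨∑ p : Fin n × Fin m, min (a p.1) (b p.2) • (e p.1 * f p.2), ?_⟩
      exact spec_isGLB hS (fun p : Fin n × Fin m => a p.1) (fun p : Fin n × Fin m => b p.2) (fun p : Fin n × Fin m => e p.1 * f p.2)
        (spOrth_prod he hf) (sp_prod_sum_one hesum hfsum) hsg htg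
    · -- translation invariance
      intro s t r h
      show OrthNonnegDecomp D S ((t + r) - (s + r))
      have he : (t + r) - (s + r) = t - s := by ring
      rw [he]
      exact h
    · -- products of nonnegatives
      intro s t h1 h2
      have h1' : OrthNonnegDecomp D S s := by
        have he : s - 0 = s := sub_zero s
        rw [← he]; exact h1
      have h2' : OrthNonnegDecomp D S t := by
        have he : t - 0 = t := sub_zero t
        rw [← he]; exact h2
      show OrthNonnegDecomp D S (s * t - 0)
      rw [sub_zero]
      exact sp_P_mul h1' h2'
    · -- nonneg scalars
      intro c s hc h
      have h' : OrthNonnegDecomp D S s := by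
        have he : s - 0 = s := sub_zero s
        rw [← he]; exact h
      show OrthNonnegDecomp D S (c • s - 0)
      rw [sub_zero]
      exact sp_P_smul hc h'
    · -- f-ring axiom
      intro r s t hst hr
      obtain ⟨n1, a1, e1, he1, hs1, hq1⟩ := spGD_exists hS s
      obtain ⟨n2, a2, e2, he2, hs2, hq2⟩ := spGD_exists hS t
      obtain ⟨n3, a3, e3, he3, hs3, hq3⟩ := spGD_exists hS r
      have hg0 : SpOrth (fun p : Fin n1 × Fin n2 => e1 p.1 * e2 p.2) := spOrth_prod he1 he2
      have hg0sum : ∑ p : Fin n1 × Fin n2, e1 p.1 * e2 p.2 = 1 := sp_prod_sum_one hs1 hs2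
      have hg : SpOrth (fun q : (Fin n1 × Fin n2) × Fin n3 =>
          (e1 q.1.1 * e2 q.1.2) * e3 q.2) := spOrth_prod hg0 he3
      have hgsum : ∑ q : (Fin n1 × Fin n2) × Fin n3, (e1 q.1.1 * e2 q.1.2) * e3 q.2 = 1 :=
        sp_prod_sum_one hg0sum hs3
      have hsg : s = ∑ q : (Fin n1 × Fin n2) × Fin n3,
          a1 q.1.1 • ((e1 q.1.1 * e2 q.1.2) * e3 q.2) := by
        rw [hq1, sp_refine_fst a1 e1 hs2]
        exact sp_refine_fst (fun p : Fin n1 × Fin n2 => a1 p.1)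
          (fun p : Fin n1 × Fin n2 => e1 p.1 * e2 p.2) hs3
      have htg : t = ∑ q : (Fin n1 × Fin n2) × Fin n3,
          a2 q.1.2 • ((e1 q.1.1 * e2 q.1.2) * e3 q.2) := by
        rw [hq2, sp_refine_snd a2 e2 hs1]
        exact sp_refine_fst (fun p : Fin n1 × Fin n2 => a2 p.2)
          (fun p : Fin n1 × Fin n2 => e1 p.1 * e2 p.2) hs3
      have hrg : r = ∑ q : (Fin n1 × Fin n2) × Fin n3,
          a3 q.2 • ((e1 q.1.1 * e2 q.1.2) * e3 q.2) := by
        rw [hq3]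
        exact sp_refine_snd a3 e3 hg0sum
      -- the glb of s,t over the common family is 0
      have hGLB := spec_isGLB hS (fun q : (Fin n1 × Fin n2) × Fin n3 => a1 q.1.1)
        (fun q => a2 q.1.2) (fun q => (e1 q.1.1 * e2 q.1.2) * e3 q.2) hg hgsum hsg htg
      have hmin0 : ∑ q : (Fin n1 × Fin n2) × Fin n3,
          min (a1 q.1.1) (a2 q.1.2) • ((e1 q.1.1 * e2 q.1.2) * e3 q.2) = 0 :=
        hGLB.unique hst
      have hterm : ∀ q : (Fin n1 × Fin n2) × Fin n3,
          (e1 q.1.1 * e2 q.1.2) * e3 q.2 = 0 ∨ min (a1 q.1.1) (a2 q.1.2) = 0 := by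
        intro q
        have hmul := spOrth_mul_sum hg (fun q => min (a1 q.1.1) (a2 q.1.2)) q
        rw [hmin0, zero_mul] at hmul
        rcases hS.1 _ _ hmul.symm with h | h
        · right; exact h
        · left; exact h
      -- positivity of s, t, r gives signs
      have hs0 : OrthNonnegDecomp D S s := by
        have h := hst.1 (show s ∈ ({s, t} : Set S) by simp)
        have he : s - 0 = s := sub_zero s
        rw [← he]; exact h
      have ht0 : OrthNonnegDecomp D S t := by
        have h := hst.1 (show t ∈ ({s, t} : Set S) by simp)
        have he : t - 0 = t := sub_zero t
        rw [← he]; exact h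
      have hr0 : OrthNonnegDecomp D S r := by
        have he : r - 0 = r := sub_zero r
        rw [← he]; exact hr
      have sA := sp_P_sign hS hg hsg hs0
      have sB := sp_P_sign hS hg htg ht0
      have sC := sp_P_sign hS hg hrg hr0
      -- r * s over the common family
      have hrsg : r * s = ∑ q : (Fin n1 × Fin n2) × Fin n3,
          (a3 q.2 * a1 q.1.1) • ((e1 q.1.1 * e2 q.1.2) * e3 q.2) := by
        rw [hrg, hsg]
        exact spOrth_mul_mul hg _ _
      have hGLB2 := spec_isGLB hS (fun q : (Fin n1 × Fin n2) × Fin n3 => a3 q.2 * a1 q.1.1)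
        (fun q => a2 q.1.2) (fun q => (e1 q.1.1 * e2 q.1.2) * e3 q.2) hg hgsum hrsg htg
      have hzero : ∑ q : (Fin n1 × Fin n2) × Fin n3,
          min (a3 q.2 * a1 q.1.1) (a2 q.1.2) • ((e1 q.1.1 * e2 q.1.2) * e3 q.2) = 0 := by
        refine Finset.sum_eq_zero fun q _ => ?_
        by_cases hq : (e1 q.1.1 * e2 q.1.2) * e3 q.2 = 0
        · rw [hq, smul_zero]
        · have hA : 0 ≤ a1 q.1.1 := le_of_not_gt fun h => hq (sA q h)
          have hB : 0 ≤ a2 q.1.2 := le_of_not_gt fun h => hq (sB q h)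
          have hC : 0 ≤ a3 q.2 := le_of_not_gt fun h => hq (sC q h)
          have hmin : min (a1 q.1.1) (a2 q.1.2) = 0 := (hterm q).resolve_left hq
          have : min (a3 q.2 * a1 q.1.1) (a2 q.1.2) = 0 := by
            rcases le_total (a1 q.1.1) (a2 q.1.2) with h | h
            · have ha1 : a1 q.1.1 = 0 := by
                rw [min_eq_left h] at hmin
                exact hmin
              rw [ha1, mul_zero]
              exact min_eq_left hB
            · have ha2 : a2 q.1.2 = 0 := by
                rw [min_eq_right h] at hmin
                exact hmin
              rw [ha2]
              exact min_eq_right (mul_nonneg hC hA)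
          rw [this, zero_smul]
      rw [hzero] at hGLB2
      exact hGLB2
  · -- OrderEqDecomp
    unfold OrderEqDecomp
    exact fun s t => Iff.rfl
  · -- OrderIdemUsual
    unfold OrderIdemUsual
    intro e f he hf
    constructor
    · intro h
      have h' : OrthNonnegDecomp D S (f - e) := h
      have h1 : OrthNonnegDecomp D S (e * f - e) := by
        have he2 : e * f - e = e * (f - e) := by
          have := he
          unfold IsIdempotentElem at this
          linear_combination this
        rw [he2]
        exact sp_P_mul (sp_P_idem he) h'
      have h2 : OrthNonnegDecomp D S (-(e * f - e)) := by
        have he2 : -(e * f - e) = (1 - f) * e := by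
          ring
        rw [he2]
        exact sp_P_mul (sp_P_idem hf.one_sub) (sp_P_idem he)
      exact sub_eq_zero.mp (sp_P_antisymm hS h1 h2)
    · intro h
      show OrthNonnegDecomp D S (f - e)
      have hidem : IsIdempotentElem (f - e) := by
        show (f - e) * (f - e) = f - e
        have h1 : e * e = e := he
        have h2 : f * f = f := hf
        linear_combination h2 + h1 - 2 * h
      exact sp_P_idem hidem
  · -- uniqueness
    intro iP' hiP'
    unfold IsFAlgebraOrder at hiP'
    letI := iP'
    obtain ⟨hsup, hinf, htrans, hmul, hsmul, hfax⟩ := hiP'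
    have key : ∀ u v : S, u ≤ v ↔ (0 : S) ≤ v - u := by
      intro u v
      constructor
      · intro h
        have h2 := htrans u v (-u) h
        have e1 : u + -u = (0 : S) := by ring
        have e2 : v + -u = v - u := by ring
        rwa [e1, e2] at h2
      · intro h
        have h2 := htrans 0 (v - u) u h
        have e1 : (0 : S) + u = u := by ring
        have e2 : v - u + u = v := by ring
        rwa [e1, e2] at h2
    have idem_pos : ∀ x : S, IsIdempotentElem x → (0 : S) ≤ x := by
      intro x hx
      obtain ⟨p, hp0⟩ := hsup x 0
      obtain ⟨q, hq0⟩ := hsup (-x) 0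
      rw [sp_isLUB_pair_iff] at hp0 hq0
      obtain ⟨⟨hpx, hp0'⟩, hpl⟩ := hp0
      obtain ⟨⟨hqx, hq0'⟩, hql⟩ := hq0
      -- p = q + x
      have hpq : p = q + x := by
        have hub1 : x ≤ q + x := by
          rw [key]
          have e1 : q + x - x = q := by ring
          rwa [e1]
        have hub2 : (0 : S) ≤ q + x := by
          rw [key] at hqx ⊢
          have e1 : q + x - 0 = q - -x := by ring
          rwa [e1]
        have hle : p ≤ q + x := hpl (q + x) hub1 hub2
        have hge : q + x ≤ p := by
          have hq_le : q ≤ p - x := by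
            refine hql (p - x) ?_ ?_
            · rw [key]
              have e1 : p - x - -x = p - 0 := by ring
              rw [e1, ← key]
              exact hp0'
            · rw [key]
              have e1 : p - x - 0 = p - x := by ring
              rw [e1, ← key]
              exact hpx
          rw [key] at hq_le ⊢
          have e1 : p - (q + x) = p - x - q := by ring
          rwa [e1]
        exact le_antisymm hle hge
      -- IsGLB {q, p} 0
      have hglb : IsGLB {q, p} (0 : S) := by
        rw [sp_isGLB_pair_iff]
        refine ⟨⟨hq0', hp0'⟩, ?_⟩
        intro v hvq hvp
        have hub1 : -x ≤ q - v := by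
          rw [key]
          have e1 : q - v - -x = p - v := by rw [hpq]; ring
          rw [e1, ← key]
          exact hvp
        have hub2 : (0 : S) ≤ q - v := by
          rw [← key]
          exact hvq
        have hq_le : q ≤ q - v := hql (q - v) hub1 hub2
        rw [key] at hq_le ⊢
        have e1 : q - v - q = 0 - v := by ring
        rwa [e1] at hq_le
      -- p * q = 0 via the f-ring axiom applied twice
      have step1 : IsGLB {p * q, p} (0 : S) := hfax p q p hglb hp0'
      rw [Set.pair_comm] at step1
      have step2 : IsGLB {q * p, p * q} (0 : S) := hfax q p (p * q) step1 hq0'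
      rw [mul_comm q p, Set.pair_eq_singleton] at step2
      have hpq0 : p * q = 0 := isGLB_singleton.unique step2
      -- now algebra: q * q = 0, hence q = 0, hence x = p ≥ 0
      have hxq : x * q = -(q * q) := by
        have h1 : (q + x) * q = 0 := by rw [← hpq]; exact hpq0
        linear_combination h1
      have e3 : x * (q * q) = q * q := by
        have e1 : x * (x * q) = x * q := by
          rw [← mul_assoc]
          have hxx : x * x = x := hx
          rw [hxx]
        have e2 : x * (x * q) = -(x * (q * q)) := by rw [hxq]; ring
        have e4 : x * q = -(x * (q * q)) := by rw [← e1, e2]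
        have e5 : -(q * q) = -(x * (q * q)) := by rw [← hxq, e4]
        linear_combination e5
      have e4 : x * (q * q) = -(q * q * q) := by
        linear_combination q * hxq
      have hqq_eq : q * q = -(q * q * q) := by linear_combination e4 - e3
      have hq2 : (0 : S) ≤ q * q := hmul q q hq0' hq0'
      have hq3 : (0 : S) ≤ q * q * q := hmul (q * q) q hq2 hq0'
      have hq2' : q * q ≤ 0 := by
        rw [key]
        have e1 : (0 : S) - q * q = q * q * q := by linear_combination -hqq_eq
        rwa [e1]
      have hqq0 : q * q = 0 := le_antisymm hq2' hq2
      have hqzero : q = 0 := sp_reduced hS hqq0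
      have hpx2 : p = x := by rw [hpq, hqzero, zero_add]
      rw [← hpx2]
      exact hp0'
    -- the two cones coincide
    have key1 : ∀ x : S, (0 : S) ≤ x → OrthNonnegDecomp D S x := by
      intro x hx
      obtain ⟨n, a, e, he, hesum, hxe⟩ := spGD_exists hS x
      refine sp_P_of_vanish he hxe ?_
      intro k hk
      have hek : (0 : S) ≤ e k := idem_pos _ (he.1 k)
      have h1 : (0 : S) ≤ x * e k := hmul x (e k) hx hek
      rw [hxe, spOrth_mul_sum he a k] at h1
      have h2 : (0 : S) ≤ (-a k) • e k := hsmul (-a k) (e k) (by linarith) hek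
      have h3 : a k • e k ≤ 0 := by
        have h4 := htrans 0 ((-a k) • e k) (a k • e k) h2
        have e1 : (0 : S) + a k • e k = a k • e k := by ring
        have e2 : (-a k) • e k + a k • e k = 0 := by
          rw [neg_smul]
          ring
        rwa [e1, e2] at h4
      have h5 : a k • e k = 0 := le_antisymm h3 h1
      rcases hS.1 _ _ h5 with h6 | h6
      · exact absurd h6 (ne_of_lt hk)
      · exact h6
    have key2 : ∀ x : S, OrthNonnegDecomp D S x → (0 : S) ≤ x := by
      intro x hx
      obtain ⟨n, a, e, ha, hidem, horth, hxe⟩ := hx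
      rw [hxe]
      refine Finset.sum_induction _ (fun y => (0 : S) ≤ y) ?_ le_rfl ?_
      · intro y z hy hz
        have h1 := htrans 0 y z hy
        have e1 : (0 : S) + z = z := by ring
        rw [e1] at h1
        exact le_trans hz h1
      · intro i _
        exact hsmul (a i) (e i) (ha i) (idem_pos _ (hidem i))
    refine PartialOrder.ext ?_
    intro s t
    constructor
    · intro h
      show OrthNonnegDecomp D S (t - s)
      exact key1 _ ((key s t).mp h)
    · intro h
      have h' : OrthNonnegDecomp D S (t - s) := h
      exact (key s t).mpr (key2 _ h')
end

section
/- Let D be a totally ordered integral domain, B a boolean algebra, and D[B]* the boolean power with the f-algebra ordering. Then for f, g ∈ D[B]*: f ≥ 0 if and only if f(a) = 0 for every a < 0 in D; consequently f ≤ g iff (g − f)(a) = 0 for all a < 0. -/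
open Finset

section BPHelpers

variable {D B : Type*} [CommRing D] [LinearOrder D] [IsStrictOrderedRing D] [BooleanAlgebra B]
  [CommRing (DBStar D B)] [Algebra D (DBStar D B)]

lemma isLUB_bot_of {S : Set B} {u : B} (h : IsLUB S u) (hS : ∀ x ∈ S, x = ⊥) : u = ⊥ :=
  le_bot_iff.mp (h.2 fun x hx => (hS x hx).le)

lemma bp_disj (f : DBStar D B) {a b : D} (h : a ≠ b) : f.1 a ⊓ f.1 b = ⊥ := f.2.2.1 a b h

lemma zero_fn (hF : FosterOps D B) (t : D) :
    (0 : DBStar D B).1 t = if t = 0 then ⊤ else ⊥ := by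
  have hl := hF.2.2 (0 : D) (0 : DBStar D B) t
  rw [zero_smul] at hl
  by_cases ht : t = 0
  · subst ht
    rw [if_pos rfl]
    have h2 : IsLUB {x : B | ∃ c : D, (0:D) * c = 0 ∧ x = (0 : DBStar D B).1 c} ⊤ := by
      have hset : {x : B | ∃ c : D, (0:D) * c = 0 ∧ x = (0 : DBStar D B).1 c}
          = Set.range (0 : DBStar D B).1 := by
        ext x; simp [eq_comm]
      rw [hset]; exact (0 : DBStar D B).2.2.2
    exact hl.unique h2
  · rw [if_neg ht]
    refine isLUB_bot_of hl ?_
    rintro x ⟨c, hc, rfl⟩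
    exact absurd (by simpa using hc.symm) ht

lemma idem_fn (hF : FosterOps D B) {e : DBStar D B} (he : e * e = e) {t : D}
    (h0 : t ≠ 0) (h1 : t ≠ 1) : e.1 t = ⊥ := by
  have hl := hF.2.1 e e t
  rw [he] at hl
  have hub : (e.1 t)ᶜ ∈ upperBounds {x : B | ∃ b c : D, b * c = t ∧ x = e.1 b ⊓ e.1 c} := by
    rintro x ⟨b, c, hbc, rfl⟩
    by_cases hb : b = c
    · subst hb
      have hbt : b ≠ t := by
        rintro rfl
        rcases mul_eq_zero.mp (show b * (b - 1) = 0 by linear_combination hbc) with h | h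
        · exact h0 h
        · exact h1 (by linarith [sub_eq_zero.mp h])
      calc e.1 b ⊓ e.1 b ≤ e.1 b := inf_le_left
        _ ≤ (e.1 t)ᶜ := le_compl_iff_disjoint_right.mpr (disjoint_iff.mpr (bp_disj e hbt))
    · rw [bp_disj e hb]; exact bot_le
  have hle := hl.2 hub
  have : e.1 t ≤ e.1 t ⊓ (e.1 t)ᶜ := le_inf le_rfl hle
  rw [inf_compl_eq_bot] at this
  exact le_bot_iff.mp this

lemma smul_fn_neg (hF : FosterOps D B) {a : D} (ha : 0 ≤ a) {e : DBStar D B}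
    (he : IsIdempotentElem e) {t : D} (ht : t < 0) : (a • e).1 t = ⊥ := by
  refine isLUB_bot_of (hF.2.2 a e t) ?_
  rintro x ⟨c, hc, rfl⟩
  rcases ha.lt_or_eq with ha' | ha'
  · have hc0 : c < 0 := by nlinarith
    exact idem_fn hF he (ne_of_lt hc0) (by linarith)
  · exfalso; rw [← ha', zero_mul] at hc; exact absurd hc.symm (by linarith)

lemma add_fn_neg (hF : FosterOps D B) {f g : DBStar D B}
    (hf : ∀ t < (0:D), f.1 t = ⊥) (hg : ∀ t < (0:D), g.1 t = ⊥)
    {t : D} (ht : t < 0) : (f + g).1 t = ⊥ := by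
  refine isLUB_bot_of (hF.1 f g t) ?_
  rintro x ⟨b, c, hbc, rfl⟩
  rcases lt_or_ge b 0 with hb | hb
  · rw [hf b hb, bot_inf_eq]
  · have hc : c < 0 := by linarith
    rw [hg c hc, inf_bot_eq]

lemma sum_fn_neg (hF : FosterOps D B) {ι : Type*} (s : Finset ι) (g : ι → DBStar D B)
    :
    (∀ i ∈ s, ∀ t < (0:D), (g i).1 t = ⊥) → ∀ t < (0:D), (∑ i ∈ s, g i).1 t = ⊥ := by
  classical
  induction s using Finset.induction_on with
  | empty => intro _ t ht; rw [Finset.sum_empty, zero_fn hF, if_neg (ne_of_lt ht)]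
  | insert j s' hjs ih =>
    intro hg t ht
    rw [Finset.sum_insert hjs]
    exact add_fn_neg hF (fun u hu => hg j (Finset.mem_insert_self j s') u hu)
      (fun u hu => ih (fun i hi u' hu' => hg i (Finset.mem_insert_of_mem hi) u' hu') u hu) ht

/-- The characteristic idempotent function. -/
def chi (b : B) : DBStar D B :=
  ⟨fun t => if t = 0 then bᶜ else if t = 1 then b else ⊥, by
    refine ⟨?_, ?_, ?_, ?_⟩
    · apply Set.Finite.subset (((Set.finite_singleton (⊥:B)).insert b).insert bᶜ)
      rintro x ⟨t, rfl⟩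
      by_cases h0 : t = 0 <;> by_cases h1 : t = 1 <;> simp [h0, h1]
    · intro a b' hab
      by_cases ha0 : a = 0 <;> by_cases hb0 : b' = 0 <;> by_cases ha1 : a = 1 <;>
        by_cases hb1 : b' = 1 <;>
        simp_all [inf_compl_eq_bot, compl_inf_eq_bot]
    · rintro x ⟨t, rfl⟩; exact le_top
    · intro v hv
      have hb : b ≤ v := by
        have := hv ⟨(1:D), rfl⟩
        simpa [one_ne_zero] using this
      have hbc : bᶜ ≤ v := by
        have := hv ⟨(0:D), rfl⟩
        simpa using this
      calc ⊤ = b ⊔ bᶜ := (sup_compl_eq_top).symm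
        _ ≤ v := sup_le hb hbc⟩

@[simp] lemma chi_zero (b : B) : (chi b : DBStar D B).1 0 = bᶜ := by simp [chi]

@[simp] lemma chi_one (b : B) : (chi b : DBStar D B).1 1 = b := by simp [chi, one_ne_zero]

lemma chi_other (b : B) {t : D} (h0 : t ≠ 0) (h1 : t ≠ 1) : (chi b : DBStar D B).1 t = ⊥ := by
  simp [chi, h0, h1]

end BPHelpers
section BPMain

variable {D B : Type*} [CommRing D] [LinearOrder D] [IsStrictOrderedRing D] [BooleanAlgebra B]
  [CommRing (DBStar D B)] [Algebra D (DBStar D B)]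

lemma DBStar.ext {f g : DBStar D B} (h : ∀ t, f.1 t = g.1 t) : f = g :=
  Subtype.ext (funext h)

lemma chi_idem (hF : FosterOps D B) (b : B) : IsIdempotentElem (chi b : DBStar D B) := by
  have key : ∀ t : D, IsLUB {x : B | ∃ p q : D, p * q = t ∧
      x = (chi b : DBStar D B).1 p ⊓ (chi b : DBStar D B).1 q} ((chi b : DBStar D B).1 t) := by
    intro t
    constructor
    · rintro x ⟨p, q, hpq, rfl⟩
      by_cases ht0 : t = 0
      · subst ht0
        rw [chi_zero]
        rcases mul_eq_zero.mp hpq with h | h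
        · rw [h, chi_zero]; exact inf_le_left
        · rw [h, chi_zero]; exact inf_le_right
      · by_cases hp0 : p = 0
        · exact absurd (by rw [hp0, zero_mul] at hpq; exact hpq.symm) ht0
        by_cases hp1 : p = 1
        · subst hp1; rw [one_mul] at hpq; rw [hpq]; exact inf_le_right
        · rw [chi_other b hp0 hp1, bot_inf_eq]; exact bot_le
    · intro v hv
      by_cases ht0 : t = 0
      · subst ht0; rw [chi_zero]
        exact hv ⟨0, 0, by ring, by simp⟩
      by_cases ht1 : t = 1
      · subst ht1; rw [chi_one]
        exact hv ⟨1, 1, by ring, by simp⟩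
      · rw [chi_other b ht0 ht1]; exact bot_le
  exact DBStar.ext fun t => (hF.2.1 (chi b) (chi b) t).unique (key t)

lemma chi_orth (hF : FosterOps D B) {b c : B} (hbc : b ⊓ c = ⊥) :
    (chi b : DBStar D B) * chi c = 0 := by
  apply DBStar.ext; intro t
  rw [zero_fn hF t]
  refine (hF.2.1 (chi b) (chi c) t).unique ?_
  by_cases ht : t = 0
  · rw [if_pos ht]
    constructor
    · rintro x _; exact le_top
    · intro v hv
      have h1 : bᶜ ⊓ cᶜ ≤ v := hv ⟨0, 0, by rw [ht]; ring, by simp⟩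
      have h2' : bᶜ ⊓ c ≤ v := hv ⟨0, 1, by rw [ht]; ring, by simp⟩
      have h3' : b ⊓ cᶜ ≤ v := hv ⟨1, 0, by rw [ht]; ring, by simp⟩
      have h2 : c ≤ v := le_trans (le_inf
        (le_compl_iff_disjoint_right.mpr (disjoint_iff.mpr (by rwa [inf_comm] at hbc))) le_rfl) h2'
      have h3 : b ≤ v := le_trans (le_inf le_rfl
        (le_compl_iff_disjoint_right.mpr (disjoint_iff.mpr hbc))) h3'
      calc ⊤ = (b ⊔ c) ⊔ (b ⊔ c)ᶜ := (sup_compl_eq_top).symm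
        _ ≤ v := sup_le (sup_le h3 h2)
            (le_trans (le_of_eq compl_sup) h1)
  · rw [if_neg ht]
    constructor
    · rintro x ⟨p, q, hpq, rfl⟩
      by_cases hp0 : p = 0
      · exact absurd (by rw [hp0, zero_mul] at hpq; exact hpq.symm) ht
      by_cases hp1 : p = 1
      · subst hp1; rw [one_mul] at hpq
        by_cases hq0 : q = 0
        · exact absurd (by rw [hq0] at hpq; exact hpq.symm) ht
        by_cases hq1 : q = 1
        · subst hq1; rw [chi_one, chi_one, hbc]
        · rw [chi_other c hq0 hq1, inf_bot_eq]
      · rw [chi_other b hp0 hp1, bot_inf_eq]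
    · intro v _; exact bot_le

lemma smul_chi_fn (hF : FosterOps D B) {j : D} (hj : j ≠ 0) (b : B) (t : D) :
    ((j • chi b : DBStar D B)).1 t = if t = j then b else if t = 0 then bᶜ else ⊥ := by
  refine (hF.2.2 j (chi b) t).unique ?_
  constructor
  · rintro x ⟨c, hc, rfl⟩
    by_cases hc0 : c = 0
    · subst hc0; rw [mul_zero] at hc
      rw [← hc, chi_zero, if_neg (Ne.symm hj), if_pos rfl]
    by_cases hc1 : c = 1
    · subst hc1; rw [mul_one] at hc
      rw [← hc, chi_one, if_pos rfl]
    · rw [chi_other b hc0 hc1]; exact bot_le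
  · intro v hv
    by_cases htj : t = j
    · rw [if_pos htj]
      exact hv ⟨1, by rw [mul_one]; exact htj.symm, (chi_one b).symm⟩
    by_cases ht0 : t = 0
    · rw [if_neg htj, if_pos ht0]
      exact hv ⟨0, by rw [mul_zero]; exact ht0.symm, (chi_zero b).symm⟩
    · rw [if_neg htj, if_neg ht0]; exact bot_le

end BPMain
section BPSum

variable {D B : Type*} [CommRing D] [LinearOrder D] [IsStrictOrderedRing D] [BooleanAlgebra B]
  [CommRing (DBStar D B)] [Algebra D (DBStar D B)]

lemma sum_chi_fn (hF : FosterOps D B) (h : D → B) (s : Finset D) :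
    (∀ a ∈ s, 0 < a) → (∀ a ∈ s, ∀ a' ∈ s, a ≠ a' → h a ⊓ h a' = ⊥) →
    (∀ a ∈ s, (∑ x ∈ s, (x • chi (h x) : DBStar D B)).1 a = h a) ∧
    ((∑ x ∈ s, (x • chi (h x) : DBStar D B)).1 0 = (s.sup h)ᶜ) ∧
    (∀ t : D, t ≠ 0 → t ∉ s → (∑ x ∈ s, (x • chi (h x) : DBStar D B)).1 t = ⊥) := by
  classical
  induction s using Finset.induction_on with
  | empty =>
    intro _ _
    refine ⟨by simp, ?_, ?_⟩
    · rw [Finset.sum_empty, zero_fn hF, if_pos rfl, Finset.sup_empty, compl_bot]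
    · intro t ht _; rw [Finset.sum_empty, zero_fn hF, if_neg ht]
  | insert j s' hjs ih =>
    intro hpos hdisj
    have hj0 : j ≠ 0 := ne_of_gt (hpos j (Finset.mem_insert_self _ _))
    obtain ⟨ih1, ih2, ih3⟩ := ih (fun a ha => hpos a (Finset.mem_insert_of_mem ha))
      (fun a ha a' ha' hne =>
        hdisj a (Finset.mem_insert_of_mem ha) a' (Finset.mem_insert_of_mem ha') hne)
    set G := (∑ x ∈ s', (x • chi (h x) : DBStar D B)) with hG
    have hsum : (∑ x ∈ insert j s', (x • chi (h x) : DBStar D B)) = j • chi (h j) + G :=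
      Finset.sum_insert hjs
    have hdj : ∀ a ∈ s', h j ⊓ h a = ⊥ := fun a ha =>
      hdisj j (Finset.mem_insert_self _ _) a (Finset.mem_insert_of_mem ha)
        (fun he => hjs (he ▸ ha))
    have hjsup : h j ≤ (s'.sup h)ᶜ := le_compl_iff_disjoint_right.mpr
      (Finset.disjoint_sup_right.mpr (fun a ha => disjoint_iff.mpr (hdj a ha)))
    have key : ∀ t : D, IsLUB {x : B | ∃ p q : D, p + q = t ∧
        x = (j • chi (h j) : DBStar D B).1 p ⊓ G.1 q}
        (if t = j then h j else if t = 0 then (h j)ᶜ ⊓ (s'.sup h)ᶜ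
          else if t ∈ s' then h t else ⊥) := by
      intro t
      constructor
      · rintro x ⟨p, q, hpq, rfl⟩
        rw [smul_chi_fn hF hj0]
        by_cases hpj : p = j
        · rw [if_pos hpj]
          by_cases hq0 : q = 0
          · subst hq0
            have htj : t = j := by rw [← hpq, add_zero]; exact hpj
            rw [ih2, if_pos htj]
            exact inf_le_left
          by_cases hqs : q ∈ s'
          · rw [ih1 q hqs, hdj q hqs]
            exact bot_le
          · rw [ih3 q hq0 hqs, inf_bot_eq]
            exact bot_le
        · rw [if_neg hpj]
          by_cases hp0 : p = 0
          · rw [if_pos hp0]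
            subst hp0
            rw [zero_add] at hpq
            subst hpq
            by_cases hq0 : q = 0
            · subst hq0
              rw [ih2, if_neg (Ne.symm hj0), if_pos rfl]
            by_cases hqs : q ∈ s'
            · have hqj : q ≠ j := fun he => hjs (he ▸ hqs)
              rw [ih1 q hqs, if_neg hqj, if_neg hq0, if_pos hqs]
              exact inf_le_right
            · rw [ih3 q hq0 hqs, inf_bot_eq]
              exact bot_le
          · rw [if_neg hp0, bot_inf_eq]
            exact bot_le
      · intro v hv
        by_cases htj : t = j
        · rw [if_pos htj]
          have hmem : (j • chi (h j) : DBStar D B).1 j ⊓ G.1 0 ≤ v :=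
            hv ⟨j, 0, by rw [add_zero]; exact htj.symm, rfl⟩
          rw [smul_chi_fn hF hj0, if_pos rfl, ih2] at hmem
          exact le_trans (le_inf le_rfl hjsup) hmem
        rw [if_neg htj]
        by_cases ht0 : t = 0
        · rw [if_pos ht0]
          have hmem : (j • chi (h j) : DBStar D B).1 0 ⊓ G.1 0 ≤ v :=
            hv ⟨0, 0, by rw [add_zero]; exact ht0.symm, rfl⟩
          rw [smul_chi_fn hF hj0, if_neg (Ne.symm hj0), if_pos rfl, ih2] at hmem
          exact hmem
        rw [if_neg ht0]
        by_cases hts : t ∈ s'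
        · rw [if_pos hts]
          have hmem : (j • chi (h j) : DBStar D B).1 0 ⊓ G.1 t ≤ v :=
            hv ⟨0, t, zero_add t, rfl⟩
          rw [smul_chi_fn hF hj0, if_neg (Ne.symm hj0), if_pos rfl, ih1 t hts] at hmem
          have hle : h t ≤ (h j)ᶜ := le_compl_iff_disjoint_right.mpr
            (disjoint_iff.mpr (by rw [inf_comm]; exact hdj t hts))
          exact le_trans (le_inf hle le_rfl) hmem
        · rw [if_neg hts]; exact bot_le
    have hval : ∀ t : D, (∑ x ∈ insert j s', (x • chi (h x) : DBStar D B)).1 t =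
        (if t = j then h j else if t = 0 then (h j)ᶜ ⊓ (s'.sup h)ᶜ
          else if t ∈ s' then h t else ⊥) := by
      intro t
      rw [hsum]
      exact (hF.1 (j • chi (h j)) G t).unique (key t)
    refine ⟨?_, ?_, ?_⟩
    · intro a ha
      rcases Finset.mem_insert.mp ha with rfl | has'
      · rw [hval a, if_pos rfl]
      · have haj : a ≠ j := fun he => hjs (he ▸ has')
        rw [hval a, if_neg haj, if_neg (ne_of_gt (hpos a ha)), if_pos has']
    · rw [hval 0, if_neg (Ne.symm hj0), if_pos rfl, Finset.sup_insert, compl_sup]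
    · intro t ht hts
      have htj : t ≠ j := fun he => hts (he ▸ Finset.mem_insert_self j s')
      have hts' : t ∉ s' := fun hmem => hts (Finset.mem_insert_of_mem hmem)
      rw [hval t, if_neg htj, if_neg ht, if_neg hts']

end BPSum
/-- in `D[B]*` with its f-algebra order, `f ≥ 0` iff `f(a) = ⊥` for all
`a < 0`; consequently `f ≤ g` iff `(g − f)(a) = ⊥` for all `a < 0`. -/
theorem statement7 (D B : Type*) [CommRing D] [LinearOrder D] [IsStrictOrderedRing D] [BooleanAlgebra B]
    [CommRing (DBStar D B)] [Algebra D (DBStar D B)] (hF : FosterOps D B) :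
    (∀ f : DBStar D B, OrthNonnegDecomp D (DBStar D B) f ↔ ∀ a : D, a < 0 → f.1 a = ⊥) ∧
    (∀ f g : DBStar D B, specLE D (DBStar D B) f g ↔ ∀ a : D, a < 0 → (g - f).1 a = ⊥) := by
  classical
  have main : ∀ f : DBStar D B,
      OrthNonnegDecomp D (DBStar D B) f ↔ ∀ a : D, a < 0 → f.1 a = ⊥ := by
    intro f
    constructor
    · rintro ⟨n, a, e, hnn, hid, _, rfl⟩ t ht
      exact sum_fn_neg hF Finset.univ (fun i => a i • e i)
        (fun i _ u hu => smul_fn_neg hF (hnn i) (hid i) hu) t ht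
    · intro hneg
      have hfin : {a : D | a ≠ 0 ∧ f.1 a ≠ ⊥}.Finite := by
        apply Set.Finite.of_finite_image (f := f.1)
        · exact f.2.1.subset (Set.image_subset_range _ _)
        · intro x hx y hy hxy
          by_contra hne
          have hd := bp_disj f hne
          rw [hxy, inf_idem] at hd
          exact hy.2 hd
      set T : Finset D := hfin.toFinset with hT
      have hmemT : ∀ x : D, x ∈ T ↔ x ≠ 0 ∧ f.1 x ≠ ⊥ := fun x => hfin.mem_toFinset
      have hpos : ∀ x ∈ T, 0 < x := by
        intro x hx
        obtain ⟨hx0, hxb⟩ := (hmemT x).mp hx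
        rcases lt_trichotomy x 0 with hlt | hz | hgt
        · exact absurd (hneg x hlt) hxb
        · exact absurd hz hx0
        · exact hgt
      have hdisj : ∀ x ∈ T, ∀ y ∈ T, x ≠ y → f.1 x ⊓ f.1 y = ⊥ :=
        fun x _ y _ hxy => bp_disj f hxy
      obtain ⟨hs1, hs2, hs3⟩ := sum_chi_fn hF f.1 T hpos hdisj
      have hfeq : f = ∑ x ∈ T, (x • chi (f.1 x) : DBStar D B) := by
        apply DBStar.ext
        intro t
        by_cases htT : t ∈ T
        · rw [hs1 t htT]
        by_cases ht0 : t = 0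
        · subst ht0
          rw [hs2]
          have hdis : Disjoint (f.1 0) (T.sup f.1) := Finset.disjoint_sup_right.mpr
            (fun i hi => disjoint_iff.mpr (bp_disj f (ne_of_gt (hpos i hi)).symm))
          have hcod : Codisjoint (f.1 0) (T.sup f.1) := by
            rw [codisjoint_iff]
            refine le_antisymm le_top ?_
            refine f.2.2.2.2 ?_
            rintro x ⟨c, rfl⟩
            by_cases hc0 : c = 0
            · subst hc0; exact le_sup_left
            by_cases hcT : c ∈ T
            · exact le_trans (Finset.le_sup hcT) le_sup_right
            · have hbot : f.1 c = ⊥ := by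
                by_contra hb; exact hcT ((hmemT c).mpr ⟨hc0, hb⟩)
              rw [hbot]; exact bot_le
          exact eq_compl_iff_isCompl.mpr ⟨hdis, hcod⟩
        · have hbot : f.1 t = ⊥ := by
            by_contra hb; exact htT ((hmemT t).mpr ⟨ht0, hb⟩)
          rw [hs3 t ht0 htT, hbot]
      refine ⟨T.card, fun i => (T.equivFin.symm i : D),
        fun i => chi (f.1 (T.equivFin.symm i)), ?_, ?_, ?_, ?_⟩
      · intro i; exact (hpos _ (T.equivFin.symm i).2).le
      · intro i; exact chi_idem hF _
      · intro i k hik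
        refine chi_orth hF (bp_disj f ?_)
        intro he
        exact hik (T.equivFin.symm.injective (Subtype.coe_injective he))
      · refine hfeq.trans ?_
        calc ∑ x ∈ T, (x • chi (f.1 x) : DBStar D B)
            = ∑ x : T, ((x : D) • chi (f.1 x) : DBStar D B) :=
              (Finset.sum_coe_sort T _).symm
          _ = ∑ i : Fin T.card, ((T.equivFin.symm i : D) •
                chi (f.1 (T.equivFin.symm i)) : DBStar D B) :=
              (Equiv.sum_comp T.equivFin.symm
                (fun x : T => ((x : D) • chi (f.1 x) : DBStar D B))).symm
  exact ⟨main, fun f g => main (g - f)⟩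
end
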